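/- arXiv:1710.00956 — 5 statements merged into one kernel-verified Lean document; each statement's English description precedes it below -/
import Mathlib

section
/- Let T be a nonempty finite index set, {x_i}_{i∈T} ⊆ ℝ^m, k ≥ 1, and let s ≤ |T|. If S is drawn uniformly at random from the collection of all s-element subsets of T, then the expected value of val(S-SDP) satisfies E[val(S-SDP)] ≤ val(T-IP). -/
open scoped BigOperators

/-- The optimal `k`-means value of a finite collection of points
`x : T → ℝ^m`: the minimum over all assignments of the points into `k`
clusters of the average squared distance to the cluster centroids
(empty clusters contribute zero). -/
noncomputable def kmeansVal {m : ℕ} {T : Type*} [Fintype T] (k : ℕ)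
    (x : T → EuclideanSpace ℝ (Fin m)) : ℝ :=
  ⨅ c : T → Fin k,
    (Fintype.card T : ℝ)⁻¹ *
      ∑ t : Fin k,
        ∑ i ∈ Finset.univ.filter (fun i => c i = t),
          ‖x i - ((Finset.univ.filter (fun j => c j = t)).card : ℝ)⁻¹ •
            ∑ j ∈ Finset.univ.filter (fun j => c j = t), x j‖ ^ 2

/-- The value of the Peng–Wei semidefinite relaxation of `k`-means for the
points `x : S → ℝ^m`: minimize `(2|S|)⁻¹ tr(D X)` over symmetric matrices `X`
with `X1 = 1`, `tr X = k`, `X` entrywise nonnegative and positive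
semidefinite, where `D i j = ‖x i - x j‖²`. -/
noncomputable def sdpVal {m : ℕ} {S : Type*} [Fintype S] (k : ℕ)
    (x : S → EuclideanSpace ℝ (Fin m)) : ℝ :=
  sInf {v : ℝ | ∃ X : Matrix S S ℝ,
    X.PosSemidef ∧ (∀ i j, 0 ≤ X i j) ∧
    X.mulVec (fun _ => (1 : ℝ)) = (fun _ => (1 : ℝ)) ∧ X.trace = (k : ℝ) ∧
    v = (2 * (Fintype.card S : ℝ))⁻¹ *
      ((Matrix.of fun i j => ‖x i - x j‖ ^ 2) * X).trace}


open Finset Matrix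

lemma pair_sum_le {E : Type*} [NormedAddCommGroup E] [InnerProductSpace ℝ E]
    {ι : Type*} (B : Finset ι) (x : ι → E) (μ : E) :
    ∑ i ∈ B, ∑ j ∈ B, ‖x i - x j‖ ^ 2 ≤ 2 * B.card * ∑ i ∈ B, ‖x i - μ‖ ^ 2 := by
  have h2 : ∑ i ∈ B, ∑ j ∈ B, (inner ℝ (x i - μ) (x j - μ) : ℝ)
      = ‖∑ i ∈ B, (x i - μ)‖ ^ 2 := by
    rw [← real_inner_self_eq_norm_sq, sum_inner]
    exact Finset.sum_congr rfl fun i _ => (inner_sum _ _ _).symm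
  have key : ∑ i ∈ B, ∑ j ∈ B, ‖x i - x j‖ ^ 2
      = 2 * B.card * ∑ i ∈ B, ‖x i - μ‖ ^ 2 - 2 * ‖∑ i ∈ B, (x i - μ)‖ ^ 2 := by
    calc ∑ i ∈ B, ∑ j ∈ B, ‖x i - x j‖ ^ 2
        = ∑ i ∈ B, ∑ j ∈ B,
            (‖x i - μ‖ ^ 2 + ‖x j - μ‖ ^ 2 - 2 * inner ℝ (x i - μ) (x j - μ)) := by
          refine Finset.sum_congr rfl fun i _ => Finset.sum_congr rfl fun j _ => ?_
          have h : x i - x j = (x i - μ) - (x j - μ) := by abel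
          rw [h, @norm_sub_sq_real]; ring
      _ = (B.card : ℝ) * (∑ i ∈ B, ‖x i - μ‖ ^ 2) + (B.card : ℝ) * (∑ i ∈ B, ‖x i - μ‖ ^ 2)
            - 2 * ∑ i ∈ B, ∑ j ∈ B, (inner ℝ (x i - μ) (x j - μ) : ℝ) := by
          simp only [Finset.sum_add_distrib, Finset.sum_sub_distrib, Finset.sum_const,
            nsmul_eq_mul, Finset.mul_sum]

      _ = _ := by rw [h2]; ring
  rw [key]
  nlinarith [sq_nonneg ‖∑ i ∈ B, (x i - μ)‖]

lemma psd_smul {n : Type*} [Fintype n] {A : Matrix n n ℝ} (hA : A.PosSemidef)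
    {a : ℝ} (ha : 0 ≤ a) : (a • A).PosSemidef := by
  refine ⟨?_, fun y => ?_⟩
  · have := hA.1
    simp only [Matrix.IsHermitian, conjTranspose_smul] at this ⊢
    rw [this]
    norm_num
  · exact (hA.smul ha).2 y


lemma sdp_lb {m : ℕ} {S : Type*} [Fintype S] (k : ℕ)
    (x : S → EuclideanSpace ℝ (Fin m)) :
    ∀ v ∈ {v : ℝ | ∃ X : Matrix S S ℝ,
      X.PosSemidef ∧ (∀ i j, 0 ≤ X i j) ∧
      X.mulVec (fun _ => (1 : ℝ)) = (fun _ => (1 : ℝ)) ∧ X.trace = (k : ℝ) ∧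
      v = (2 * (Fintype.card S : ℝ))⁻¹ *
        ((Matrix.of fun i j => ‖x i - x j‖ ^ 2) * X).trace}, 0 ≤ v := by
  rintro v ⟨X, -, hnn, -, -, rfl⟩
  refine mul_nonneg (by positivity) ?_
  rw [Matrix.trace]
  refine Finset.sum_nonneg fun i _ => ?_
  rw [Matrix.diag_apply, Matrix.mul_apply]
  exact Finset.sum_nonneg fun j _ => mul_nonneg (by rw [Matrix.of_apply]; positivity) (hnn j i)


lemma sdpVal_eq_zero {m : ℕ} {S : Type*} [Fintype S] {k : ℕ}
    (h : Fintype.card S < k) (x : S → EuclideanSpace ℝ (Fin m)) :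
    sdpVal k x = 0 := by
  have hempty : {v : ℝ | ∃ X : Matrix S S ℝ,
      X.PosSemidef ∧ (∀ i j, 0 ≤ X i j) ∧
      X.mulVec (fun _ => (1 : ℝ)) = (fun _ => (1 : ℝ)) ∧ X.trace = (k : ℝ) ∧
      v = (2 * (Fintype.card S : ℝ))⁻¹ *
        ((Matrix.of fun i j => ‖x i - x j‖ ^ 2) * X).trace} = ∅ := by
    rw [Set.eq_empty_iff_forall_notMem]
    rintro v ⟨X, -, hnn, hrow, htr, -⟩
    have hd : ∀ i, X i i ≤ 1 := by
      intro i
      have h1 : X.mulVec (fun _ => (1 : ℝ)) i = 1 := by rw [hrow]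
      rw [Matrix.mulVec, dotProduct] at h1
      simp only [mul_one] at h1
      rw [← h1]
      exact Finset.single_le_sum (f := fun j => X i j) (fun j _ => hnn i j) (mem_univ i)
    have : X.trace ≤ (Fintype.card S : ℝ) := by
      rw [Matrix.trace]
      calc ∑ i, X.diag i ≤ ∑ _i : S, (1 : ℝ) := Finset.sum_le_sum fun i _ => hd i
        _ = (Fintype.card S : ℝ) := by simp
    rw [htr] at this
    exact absurd (Nat.cast_le.mp this) (not_le.mpr h)
  rw [sdpVal, hempty, Real.sInf_empty]

lemma sdpVal_le_centroid {m : ℕ} {S : Type*} [Fintype S] [DecidableEq S] {k : ℕ}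
    (hk : 1 ≤ k) (x : S → EuclideanSpace ℝ (Fin m)) (c : S → Fin k)
    (μ : Fin k → EuclideanSpace ℝ (Fin m)) :
    sdpVal k x ≤ (Fintype.card S : ℝ)⁻¹ * ∑ i, ‖x i - μ (c i)‖ ^ 2 := by
  rcases lt_or_ge (Fintype.card S) k with hcard | hks
  · rw [sdpVal_eq_zero hcard]
    positivity
  -- notation
  obtain ⟨s', hs'def⟩ : ∃ y : ℝ, y = (Fintype.card S : ℝ) := ⟨_, rfl⟩
  rw [show ((Fintype.card S : ℝ))⁻¹ = s'⁻¹ from by rw [hs'def]]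
  have hks' : (k : ℝ) ≤ s' := hs'def ▸ Nat.cast_le.mpr hks
  have hs'pos : (0:ℝ) < s' := lt_of_lt_of_le (by exact_mod_cast hk) hks'
  obtain ⟨nt, hntdef⟩ : ∃ f : Fin k → ℕ, f = fun t => (univ.filter fun i => c i = t).card :=
    ⟨_, rfl⟩
  obtain ⟨ν, hνdef⟩ : ∃ f : S → ℝ, f = fun i => ((nt (c i) : ℝ))⁻¹ := ⟨_, rfl⟩
  have hnt_pos : ∀ i, 0 < nt (c i) := fun i => by
    rw [hntdef]
    exact Finset.card_pos.mpr ⟨i, by simp⟩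
  have hν_pos : ∀ i, 0 < ν i := fun i => by
    have := hnt_pos i
    simp only [hνdef]
    positivity
  obtain ⟨Xc, hXcdef⟩ : ∃ Y : Matrix S S ℝ,
      Y = Matrix.of (fun i j => if c i = c j then ν i else 0) := ⟨_, rfl⟩
  have hXc_apply : ∀ i j, Xc i j = if c i = c j then ν i else 0 := fun i j => by
    rw [hXcdef]; rfl
  -- PSD of Xc
  have hXcpsd : Xc.PosSemidef := by
    obtain ⟨A, hAdef⟩ : ∃ Y : Matrix (Fin k) S ℝ,
        Y = Matrix.of (fun t i => if c i = t then Real.sqrt (ν i) else 0) := ⟨_, rfl⟩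
    have hfac : Aᴴ * A = Xc := by
      ext i j
      rw [Matrix.mul_apply, hXc_apply]
      have hA_apply : ∀ t i, A t i = if c i = t then Real.sqrt (ν i) else 0 := fun t i => by
        rw [hAdef]; rfl
      by_cases h : c i = c j
      · have hνij : ν i = ν j := by simp only [hνdef, h]
        rw [if_pos h]
        have hterm : ∀ t : Fin k, Aᴴ i t * A t j = if c i = t then ν i else 0 := by
          intro t
          rw [Matrix.conjTranspose_apply, hA_apply, hA_apply, star_trivial]
          by_cases ht : c i = t
          · rw [if_pos ht, if_pos (h.symm.trans ht), if_pos ht, hνij,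
              Real.mul_self_sqrt (le_of_lt (hν_pos j))]
          · rw [if_neg ht, zero_mul, if_neg ht]
        rw [Finset.sum_congr rfl fun t _ => hterm t]
        simp
      · rw [if_neg h]
        refine Finset.sum_eq_zero fun t _ => ?_
        rw [Matrix.conjTranspose_apply, hA_apply, hA_apply, star_trivial]
        by_cases h1 : c i = t
        · have h2 : ¬ c j = t := fun hh => h (h1.trans hh.symm)
          rw [if_neg h2, mul_zero]
        · rw [if_neg h1, zero_mul]
    exact hfac ▸ Matrix.posSemidef_conjTranspose_mul_self A
  -- row sums of Xc
  have hrow_c : ∀ i, ∑ j, Xc i j = 1 := by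
    intro i
    have h1 : ∑ j, Xc i j = ∑ j ∈ univ.filter (fun j => c i = c j), ν i := by
      rw [Finset.sum_filter]
      exact Finset.sum_congr rfl fun j _ => hXc_apply i j
    have h2 : (univ.filter fun j => c i = c j) = (univ.filter fun j => c j = c i) := by
      ext j; simp [eq_comm]
    rw [h1, h2, Finset.sum_const, nsmul_eq_mul]
    have hcard : (univ.filter fun j => c j = c i).card = nt (c i) := by rw [hntdef]
    rw [hcard]
    simp only [hνdef]
    exact mul_inv_cancel₀ (Nat.cast_ne_zero.mpr (hnt_pos i).ne')
  -- trace of Xc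
  obtain ⟨r, hrdef⟩ : ∃ y : ℝ, y = ∑ t : Fin k, (if nt t = 0 then (0:ℝ) else 1) := ⟨_, rfl⟩
  have htr_c : Xc.trace = r := by
    rw [Matrix.trace]
    have hdiag : ∀ i, Xc.diag i = ν i := fun i => by
      rw [Matrix.diag_apply, hXc_apply, if_pos rfl]
    rw [Finset.sum_congr rfl fun i _ => hdiag i]
    calc ∑ i, ν i = ∑ t : Fin k, ∑ i ∈ univ.filter (fun i => c i = t), ν i :=
          (Finset.sum_fiberwise _ _ _).symm
      _ = r := by
          rw [hrdef]
          refine Finset.sum_congr rfl fun t _ => ?_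
          by_cases h : nt t = 0
          · rw [if_pos h]
            have : (univ.filter fun i => c i = t) = ∅ := by
              refine Finset.card_eq_zero.mp ?_
              rw [hntdef] at h
              exact h
            rw [this, Finset.sum_empty]
          · rw [if_neg h]
            have hν' : ∀ i ∈ univ.filter (fun i => c i = t), ν i = (nt t : ℝ)⁻¹ := by
              intro i hi
              simp only [Finset.mem_filter] at hi
              simp [hνdef, hi.2]
            rw [Finset.sum_congr rfl hν', Finset.sum_const, nsmul_eq_mul]
            have hc : (univ.filter fun i => c i = t).card = nt t := by rw [hntdef]
            rw [hc]
            exact mul_inv_cancel₀ (Nat.cast_ne_zero.mpr h)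
  have hr0 : 0 ≤ r := hrdef ▸ Finset.sum_nonneg fun t _ => by split <;> norm_num
  have hrk : r ≤ (k : ℝ) := by
    rw [hrdef]
    calc (∑ t : Fin k, (if nt t = 0 then (0:ℝ) else 1))
        ≤ ∑ _t : Fin k, (1:ℝ) := Finset.sum_le_sum fun t _ => by split <;> norm_num
      _ = (k:ℝ) := by simp
  have hrs' : r ≤ s' := le_trans hrk hks'
  -- the mixing parameter
  obtain ⟨lam, hlamdef⟩ : ∃ y : ℝ, y = ((k : ℝ) - r) / (s' - r) := ⟨_, rfl⟩
  have hlam0 : 0 ≤ lam := by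
    rw [hlamdef]
    exact div_nonneg (by linarith) (by linarith)
  have hlam1 : lam ≤ 1 := by
    rcases eq_or_lt_of_le hrs' with h | h
    · rw [hlamdef, ← h, sub_self, div_zero]; norm_num
    · rw [hlamdef, div_le_one (by linarith)]; linarith
  obtain ⟨X, hXdef⟩ : ∃ Y : Matrix S S ℝ, Y = (1 - lam) • Xc + lam • (1 : Matrix S S ℝ) :=
    ⟨_, rfl⟩
  have hX_apply : ∀ i j, X i j = (1 - lam) * Xc i j + lam * (if i = j then 1 else 0) := by
    intro i j
    rw [hXdef]
    simp [Matrix.one_apply]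
  -- PSD
  have hpsd : X.PosSemidef := by
    rw [hXdef]
    exact (psd_smul hXcpsd (by linarith)).add (psd_smul Matrix.PosSemidef.one hlam0)
  -- nonneg entries
  have hXcnn : ∀ i j, 0 ≤ Xc i j := by
    intro i j
    rw [hXc_apply]
    split
    · exact le_of_lt (hν_pos i)
    · exact le_refl 0
  have hXnn : ∀ i j, 0 ≤ X i j := by
    intro i j
    rw [hX_apply]
    have h2 : (0:ℝ) ≤ if i = j then 1 else 0 := by split <;> norm_num
    exact add_nonneg (mul_nonneg (by linarith) (hXcnn i j)) (mul_nonneg hlam0 h2)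
  -- row sums
  have hXrow : X.mulVec (fun _ => (1:ℝ)) = fun _ => (1:ℝ) := by
    funext i
    rw [Matrix.mulVec, dotProduct]
    simp only [mul_one]
    calc ∑ j, X i j
        = ∑ j, ((1 - lam) * Xc i j + lam * (if i = j then 1 else 0)) :=
          Finset.sum_congr rfl fun j _ => hX_apply i j
      _ = (1 - lam) * ∑ j, Xc i j + lam * ∑ j, (if i = j then 1 else 0) := by
          rw [Finset.sum_add_distrib, Finset.mul_sum, Finset.mul_sum]
      _ = 1 := by
          rw [hrow_c i, Finset.sum_ite_eq univ i (fun _ => (1:ℝ)), if_pos (Finset.mem_univ i)]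
          ring
  -- trace
  have htrX : X.trace = (k : ℝ) := by
    have h1 : X.trace = (1 - lam) * r + lam * s' := by
      rw [hXdef, Matrix.trace_add, Matrix.trace_smul, Matrix.trace_smul, htr_c,
        Matrix.trace_one, smul_eq_mul, smul_eq_mul, hs'def]
    rw [h1]
    rcases eq_or_lt_of_le hrs' with h | h
    · have hk_eq : (k:ℝ) = r := le_antisymm (h ▸ hks') hrk
      have hlam_eq : lam = 0 := by rw [hlamdef, ← h, sub_self, div_zero]
      rw [hlam_eq, ← hk_eq]; ring
    · have hmul : lam * (s' - r) = (k:ℝ) - r := by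
        rw [hlamdef]
        exact div_mul_cancel₀ _ (by linarith : s' - r ≠ 0)
      linear_combination hmul
  -- the objective
  obtain ⟨D, hDdef⟩ : ∃ Y : Matrix S S ℝ, Y = Matrix.of (fun i j => ‖x i - x j‖ ^ 2) :=
    ⟨_, rfl⟩
  have hD_apply : ∀ i j, D i j = ‖x i - x j‖ ^ 2 := fun i j => by rw [hDdef]; rfl
  have hmem : (2 * s')⁻¹ * (D * X).trace ∈
      {v : ℝ | ∃ X : Matrix S S ℝ,
        X.PosSemidef ∧ (∀ i j, 0 ≤ X i j) ∧
        X.mulVec (fun _ => (1 : ℝ)) = (fun _ => (1 : ℝ)) ∧ X.trace = (k : ℝ) ∧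
        v = (2 * (Fintype.card S : ℝ))⁻¹ *
          ((Matrix.of fun i j => ‖x i - x j‖ ^ 2) * X).trace} :=
    ⟨X, hpsd, hXnn, hXrow, htrX, by rw [hs'def, hDdef]⟩
  have hle : sdpVal k x ≤ (2 * s')⁻¹ * (D * X).trace :=
    csInf_le ⟨0, sdp_lb k x⟩ hmem
  -- trace splitting
  have htrD1 : (D * (1 : Matrix S S ℝ)).trace = 0 := by
    rw [Matrix.mul_one, Matrix.trace]
    refine Finset.sum_eq_zero fun i _ => ?_
    rw [Matrix.diag_apply, hD_apply]
    simp
  have hsplit : (D * X).trace = (1 - lam) * (D * Xc).trace := by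
    rw [hXdef, Matrix.mul_add, Matrix.mul_smul, Matrix.mul_smul, Matrix.trace_add,
      Matrix.trace_smul, Matrix.trace_smul, htrD1, smul_eq_mul, smul_eq_mul]
    ring
  have htrDXc : (D * Xc).trace = ∑ i, ∑ j, D i j * Xc j i := by
    rw [Matrix.trace]
    exact Finset.sum_congr rfl fun i _ => by rw [Matrix.diag_apply, Matrix.mul_apply]
  have htrDXc_nn : 0 ≤ (D * Xc).trace := by
    rw [htrDXc]
    refine Finset.sum_nonneg fun i _ => Finset.sum_nonneg fun j _ => ?_
    exact mul_nonneg (by rw [hD_apply]; positivity) (hXcnn j i)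
  -- key bound
  have hkey : (D * Xc).trace ≤ 2 * ∑ i, ‖x i - μ (c i)‖ ^ 2 := by
    rw [htrDXc]
    calc ∑ i, ∑ j, D i j * Xc j i
        = ∑ j : S, ∑ i : S, D i j * Xc j i := Finset.sum_comm
      _ = ∑ t : Fin k, ∑ j ∈ univ.filter (fun j => c j = t), ∑ i : S, D i j * Xc j i :=
          (Finset.sum_fiberwise _ _ _).symm
      _ ≤ ∑ t : Fin k, 2 * ∑ j ∈ univ.filter (fun j => c j = t), ‖x j - μ t‖ ^ 2 := by
          refine Finset.sum_le_sum fun t _ => ?_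
          have hin : ∀ j ∈ univ.filter (fun j => c j = t),
              ∑ i : S, D i j * Xc j i
                = (nt t : ℝ)⁻¹ * ∑ i ∈ univ.filter (fun i => c i = t), D i j := by
            intro j hj
            have hcj : c j = t := (Finset.mem_filter.mp hj).2
            have step : ∀ i : S, D i j * Xc j i = if c i = t then (nt t:ℝ)⁻¹ * D i j else 0 := by
              intro i
              rw [hXc_apply]
              by_cases h : c i = t
              · rw [if_pos (hcj.trans h.symm), if_pos h]
                simp only [hνdef, hcj]
                ring
              · rw [if_neg (fun hh : c j = c i => h (hh.symm.trans hcj)), if_neg h, mul_zero]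
            rw [Finset.sum_congr rfl fun i _ => step i, ← Finset.sum_filter, Finset.mul_sum]
          rw [Finset.sum_congr rfl hin, ← Finset.mul_sum]
          by_cases h : nt t = 0
          · have hB : (univ.filter fun i => c i = t) = ∅ := by
              refine Finset.card_eq_zero.mp ?_
              have hc : (univ.filter fun i => c i = t).card = nt t := by rw [hntdef]
              rw [hc]
              exact h
            rw [hB]
            simp
          · have hpair : ∑ j ∈ univ.filter (fun i => c i = t),
                ∑ i ∈ univ.filter (fun i => c i = t), D i j
                ≤ 2 * (nt t : ℝ) * ∑ j ∈ univ.filter (fun i => c i = t), ‖x j - μ t‖ ^ 2 := by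
              calc ∑ j ∈ univ.filter (fun i => c i = t), ∑ i ∈ univ.filter (fun i => c i = t), D i j
                  = ∑ i ∈ univ.filter (fun i => c i = t), ∑ j ∈ univ.filter (fun i => c i = t), D i j :=
                    Finset.sum_comm
                _ = ∑ i ∈ univ.filter (fun i => c i = t), ∑ j ∈ univ.filter (fun i => c i = t), ‖x i - x j‖ ^ 2 :=
                    Finset.sum_congr rfl fun i _ => Finset.sum_congr rfl fun j _ => hD_apply i j
                _ ≤ 2 * (nt t : ℝ) * ∑ j ∈ univ.filter (fun i => c i = t), ‖x j - μ t‖ ^ 2 := by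
                    have h0 := pair_sum_le (univ.filter (fun i => c i = t)) x (μ t)
                    have hcard : ((univ.filter fun i => c i = t).card : ℝ) = (nt t : ℝ) := by
                      rw [hntdef]
                    rw [hcard] at h0
                    exact h0
            have hntpos : (0:ℝ) < (nt t : ℝ) := by
              exact_mod_cast Nat.pos_of_ne_zero h
            calc (nt t:ℝ)⁻¹ * ∑ j ∈ univ.filter (fun i => c i = t),
                  ∑ i ∈ univ.filter (fun i => c i = t), D i j
                ≤ (nt t:ℝ)⁻¹ * (2 * (nt t : ℝ) * ∑ j ∈ univ.filter (fun i => c i = t), ‖x j - μ t‖ ^ 2) :=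
                  mul_le_mul_of_nonneg_left hpair (by positivity)
              _ = 2 * ∑ j ∈ univ.filter (fun i => c i = t), ‖x j - μ t‖ ^ 2 := by
                  rw [show (nt t:ℝ)⁻¹ * (2 * (nt t:ℝ) *
                      (∑ j ∈ univ.filter (fun i => c i = t), ‖x j - μ t‖ ^ 2))
                    = ((nt t:ℝ)⁻¹ * (nt t:ℝ)) *
                      (2 * ∑ j ∈ univ.filter (fun i => c i = t), ‖x j - μ t‖ ^ 2) from by ring,
                    inv_mul_cancel₀ hntpos.ne', one_mul]
      _ = 2 * ∑ i : S, ‖x i - μ (c i)‖ ^ 2 := by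
          rw [← Finset.mul_sum]
          congr 1
          calc ∑ t : Fin k, ∑ j ∈ univ.filter (fun j => c j = t), ‖x j - μ t‖ ^ 2
              = ∑ t : Fin k, ∑ j ∈ univ.filter (fun j => c j = t), ‖x j - μ (c j)‖ ^ 2 :=
                Finset.sum_congr rfl fun t _ => Finset.sum_congr rfl fun j hj => by
                  rw [(Finset.mem_filter.mp hj).2]
            _ = ∑ j, ‖x j - μ (c j)‖ ^ 2 := Finset.sum_fiberwise _ _ _
  -- conclude
  refine le_trans hle ?_
  rw [hsplit]
  have h2s' : (0:ℝ) < 2 * s' := by linarith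
  have step1 : (1 - lam) * (D * Xc).trace ≤ (D * Xc).trace := by nlinarith
  have step2 : (2 * s')⁻¹ * ((1 - lam) * (D * Xc).trace) ≤ (2 * s')⁻¹ * (D * Xc).trace :=
    mul_le_mul_of_nonneg_left step1 (by positivity)
  refine le_trans step2 ?_
  have step3 : (2 * s')⁻¹ * (D * Xc).trace ≤ (2 * s')⁻¹ * (2 * ∑ i, ‖x i - μ (c i)‖ ^ 2) :=
    mul_le_mul_of_nonneg_left hkey (by positivity)
  refine le_trans step3 (le_of_eq ?_)
  rw [mul_inv]
  ring

lemma count_subsets {T : Type*} [Fintype T] [DecidableEq T] {s : ℕ} (hs1 : 1 ≤ s) (i : T) :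
    ((Finset.powersetCard s (Finset.univ : Finset T)).filter (fun S => i ∈ S)).card
      = (Fintype.card T - 1).choose (s - 1) := by
  have h1 : ((Finset.powersetCard s (Finset.univ : Finset T)).filter (fun S => i ∈ S)).card
      = (Finset.powersetCard (s - 1) ((Finset.univ : Finset T).erase i)).card := by
    refine Finset.card_bij' (fun S _ => S.erase i) (fun A _ => insert i A) ?_ ?_ ?_ ?_
    · intro S hS
      simp only [Finset.mem_filter, Finset.mem_powersetCard] at hS
      refine Finset.mem_powersetCard.mpr ⟨?_, ?_⟩
      · exact Finset.erase_subset_erase i hS.1.1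
      · rw [Finset.card_erase_of_mem hS.2, hS.1.2]
    · intro A hA
      rw [Finset.mem_powersetCard] at hA
      have hiA : i ∉ A := fun h => (Finset.mem_erase.mp (hA.1 h)).1 rfl
      refine Finset.mem_filter.mpr ⟨Finset.mem_powersetCard.mpr ⟨Finset.subset_univ _, ?_⟩,
        Finset.mem_insert_self i A⟩
      rw [Finset.card_insert_of_notMem hiA, hA.2]
      omega
    · intro S hS
      simp only [Finset.mem_filter] at hS
      exact Finset.insert_erase hS.2
    · intro A hA
      rw [Finset.mem_powersetCard] at hA
      have hiA : i ∉ A := fun h => (Finset.mem_erase.mp (hA.1 h)).1 rfl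
      exact Finset.erase_insert hiA
  rw [h1, Finset.card_powersetCard, Finset.card_erase_of_mem (Finset.mem_univ i),
    Finset.card_univ]

/-- Drawing a subset `S` uniformly at random from the `s`-element subsets of a
nonempty finite index set `T`, the expected value of the semidefinite
relaxation `val(S-SDP)` is at most the optimal `k`-means value `val(T-IP)`
of the full data set. -/
theorem expected_sdpVal_le_kmeansVal {m : ℕ} {T : Type*} [Fintype T] [Nonempty T]
    (k s : ℕ) (hk : 1 ≤ k) (hs : s ≤ Fintype.card T)
    (x : T → EuclideanSpace ℝ (Fin m)) :
    ((Fintype.card T).choose s : ℝ)⁻¹ *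
        ∑ S ∈ Finset.powersetCard s (Finset.univ : Finset T),
          sdpVal k (fun i : ↥S => x i)
      ≤ kmeansVal k x := by
  classical
  rw [kmeansVal]
  haveI : Nonempty (Fin k) := ⟨⟨0, hk⟩⟩
  refine le_ciInf fun c => ?_
  set μ : Fin k → EuclideanSpace ℝ (Fin m) := fun t =>
    ((Finset.univ.filter (fun j => c j = t)).card : ℝ)⁻¹ •
      ∑ j ∈ Finset.univ.filter (fun j => c j = t), x j with hμdef
  have hRHS : (Fintype.card T : ℝ)⁻¹ *
      ∑ t : Fin k, ∑ i ∈ Finset.univ.filter (fun i => c i = t),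
        ‖x i - ((Finset.univ.filter (fun j => c j = t)).card : ℝ)⁻¹ •
          ∑ j ∈ Finset.univ.filter (fun j => c j = t), x j‖ ^ 2
      = (Fintype.card T : ℝ)⁻¹ * ∑ i : T, ‖x i - μ (c i)‖ ^ 2 := by
    congr 1
    calc ∑ t : Fin k, ∑ i ∈ Finset.univ.filter (fun i => c i = t),
          ‖x i - ((Finset.univ.filter (fun j => c j = t)).card : ℝ)⁻¹ •
            ∑ j ∈ Finset.univ.filter (fun j => c j = t), x j‖ ^ 2
        = ∑ t : Fin k, ∑ i ∈ Finset.univ.filter (fun i => c i = t), ‖x i - μ (c i)‖ ^ 2 := by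
          refine Finset.sum_congr rfl fun t _ => Finset.sum_congr rfl fun i hi => ?_
          rw [(Finset.mem_filter.mp hi).2, hμdef]
      _ = ∑ i : T, ‖x i - μ (c i)‖ ^ 2 := Finset.sum_fiberwise _ _ _
  rw [hRHS]
  -- per-subset bound
  have hSbound : ∀ S ∈ Finset.powersetCard s (Finset.univ : Finset T),
      sdpVal k (fun i : ↥S => x i) ≤ (s : ℝ)⁻¹ * ∑ i ∈ S, ‖x i - μ (c i)‖ ^ 2 := by
    intro S hS
    have hcard : Fintype.card ↥S = s := by
      rw [Fintype.card_coe]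
      exact (Finset.mem_powersetCard.mp hS).2
    have h := sdpVal_le_centroid hk (fun i : ↥S => x i) (fun i => c i) μ
    rw [hcard] at h
    refine h.trans (le_of_eq ?_)
    congr 1
    exact Finset.sum_coe_sort S (fun i => ‖x i - μ (c i)‖ ^ 2)
  have hchoose_nonneg : (0:ℝ) ≤ (((Fintype.card T).choose s : ℝ))⁻¹ := by positivity
  have step1 : ((Fintype.card T).choose s : ℝ)⁻¹ *
      ∑ S ∈ Finset.powersetCard s (Finset.univ : Finset T), sdpVal k (fun i : ↥S => x i)
      ≤ ((Fintype.card T).choose s : ℝ)⁻¹ *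
        ∑ S ∈ Finset.powersetCard s (Finset.univ : Finset T),
          (s : ℝ)⁻¹ * ∑ i ∈ S, ‖x i - μ (c i)‖ ^ 2 :=
    mul_le_mul_of_nonneg_left (Finset.sum_le_sum hSbound) hchoose_nonneg
  refine step1.trans ?_
  -- s = 0 case
  rcases Nat.eq_zero_or_pos s with rfl | hs1
  · simp only [Nat.cast_zero, _root_.inv_zero, zero_mul, Finset.sum_const, smul_zero, mul_zero]
    positivity
  -- s ≥ 1 case
  have hswap : ∑ S ∈ Finset.powersetCard s (Finset.univ : Finset T),
      ∑ i ∈ S, ‖x i - μ (c i)‖ ^ 2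
      = ((Fintype.card T - 1).choose (s - 1) : ℝ) * ∑ i : T, ‖x i - μ (c i)‖ ^ 2 := by
    calc ∑ S ∈ Finset.powersetCard s (Finset.univ : Finset T), ∑ i ∈ S, ‖x i - μ (c i)‖ ^ 2
        = ∑ S ∈ Finset.powersetCard s (Finset.univ : Finset T),
            ∑ i : T, (if i ∈ S then ‖x i - μ (c i)‖ ^ 2 else 0) := by
          refine Finset.sum_congr rfl fun S _ => ?_
          rw [Finset.sum_ite_mem, Finset.univ_inter]
      _ = ∑ i : T, ∑ S ∈ Finset.powersetCard s (Finset.univ : Finset T),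
            (if i ∈ S then ‖x i - μ (c i)‖ ^ 2 else 0) := Finset.sum_comm
      _ = ∑ i : T, ((Fintype.card T - 1).choose (s - 1) : ℝ) * ‖x i - μ (c i)‖ ^ 2 := by
          refine Finset.sum_congr rfl fun i _ => ?_
          rw [Finset.sum_ite, Finset.sum_const, Finset.sum_const_zero, add_zero,
            nsmul_eq_mul, count_subsets hs1 i]
      _ = _ := by rw [← Finset.mul_sum]
  rw [← Finset.mul_sum, hswap]
  -- coefficient identity
  have hn1 : 1 ≤ Fintype.card T := Fintype.card_pos
  have hid : Fintype.card T * (Fintype.card T - 1).choose (s - 1)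
      = (Fintype.card T).choose s * s := by
    obtain ⟨n', hn'⟩ : ∃ n', Fintype.card T = n' + 1 :=
      ⟨Fintype.card T - 1, (Nat.succ_pred_eq_of_pos hn1).symm⟩
    obtain ⟨s', hs'⟩ : ∃ s', s = s' + 1 := ⟨s - 1, (Nat.succ_pred_eq_of_pos hs1).symm⟩
    rw [hn', hs']
    simpa using Nat.add_one_mul_choose_eq n' s'
  have hchoose_pos : 0 < (Fintype.card T).choose s := Nat.choose_pos hs
  have hcoeff : ((Fintype.card T).choose s : ℝ)⁻¹ *
      ((s : ℝ)⁻¹ * ((Fintype.card T - 1).choose (s - 1) : ℝ)) = (Fintype.card T : ℝ)⁻¹ := by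
    have hcast : (Fintype.card T : ℝ) * ((Fintype.card T - 1).choose (s - 1) : ℝ)
        = ((Fintype.card T).choose s : ℝ) * (s : ℝ) := by exact_mod_cast hid
    have h1 : ((Fintype.card T).choose s : ℝ) ≠ 0 := Nat.cast_ne_zero.mpr hchoose_pos.ne'
    have h2 : (s : ℝ) ≠ 0 := Nat.cast_ne_zero.mpr (by omega)
    have h3 : (Fintype.card T : ℝ) ≠ 0 := Nat.cast_ne_zero.mpr (by omega)
    field_simp
    linarith [hcast]
  refine le_of_eq ?_
  calc ((Fintype.card T).choose s : ℝ)⁻¹ *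
        ((s : ℝ)⁻¹ * (((Fintype.card T - 1).choose (s - 1) : ℝ) * ∑ i : T, ‖x i - μ (c i)‖ ^ 2))
      = (((Fintype.card T).choose s : ℝ)⁻¹ *
          ((s : ℝ)⁻¹ * ((Fintype.card T - 1).choose (s - 1) : ℝ))) *
          ∑ i : T, ‖x i - μ (c i)‖ ^ 2 := by ring
    _ = (Fintype.card T : ℝ)⁻¹ * ∑ i : T, ‖x i - μ (c i)‖ ^ 2 := by rw [hcoeff]
end

section
/- Let T be a nonempty finite index set, {x_i}_{i∈T} ⊆ ℝ^m, k ≥ 1, and let s ≤ |T|. If S is drawn uniformly at random from the collection of all s-element subsets of T, then E[val(S-IP)] ≤ val(T-IP), where val(S-IP) denotes the optimal k-means value of the subcollection {x_i}_{i∈S}. -/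
open scoped BigOperators


lemma sum_norm_sub_centroid_le {ι E : Type*} [NormedAddCommGroup E] [InnerProductSpace ℝ E]
    (A : Finset ι) (y : ι → E) (p : E) :
    ∑ i ∈ A, ‖y i - (A.card : ℝ)⁻¹ • ∑ j ∈ A, y j‖ ^ 2 ≤ ∑ i ∈ A, ‖y i - p‖ ^ 2 := by
  rcases A.eq_empty_or_nonempty with h | h
  · simp [h]
  · set n : ℝ := (A.card : ℝ) with hn'
    have hn : n ≠ 0 := Nat.cast_ne_zero.2 (Finset.card_ne_zero.2 h)
    set μ : E := n⁻¹ • ∑ j ∈ A, y j with hμ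
    have hsum : ∑ j ∈ A, y j = n • μ := by
      rw [hμ, smul_smul, mul_inv_cancel₀ hn, one_smul]
    have key : ∑ i ∈ A, ‖y i - p‖ ^ 2 - ∑ i ∈ A, ‖y i - μ‖ ^ 2 = n * ‖μ - p‖ ^ 2 := by
      rw [← Finset.sum_sub_distrib]
      have h1 : ∀ i ∈ A, ‖y i - p‖ ^ 2 - ‖y i - μ‖ ^ 2
          = 2 * ((inner ℝ (y i) (μ - p) : ℝ)) + (‖p‖ ^ 2 - ‖μ‖ ^ 2) := by
        intro i _
        rw [norm_sub_sq_real, norm_sub_sq_real, inner_sub_right]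
        ring
      rw [Finset.sum_congr rfl h1, Finset.sum_add_distrib, Finset.sum_const, ← Finset.mul_sum,
        ← sum_inner, hsum, real_inner_smul_left, nsmul_eq_mul, inner_sub_right,
        real_inner_self_eq_norm_sq, norm_sub_sq_real]
      ring
    have hnn : 0 ≤ n * ‖μ - p‖ ^ 2 := mul_nonneg (by rw [hn']; exact Nat.cast_nonneg _) (sq_nonneg _)
    linarith

lemma card_powersetCard_filter_mem {T : Type*} [Fintype T] [DecidableEq T] (s : ℕ) (i : T) :
    (((Finset.powersetCard (s + 1) (Finset.univ : Finset T))).filter (fun S => i ∈ S)).card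
      = (Fintype.card T - 1).choose s := by
  have h1 : ((Finset.univ : Finset T).erase i).card = Fintype.card T - 1 := by
    rw [Finset.card_erase_of_mem (Finset.mem_univ i), Finset.card_univ]
  rw [← h1, ← Finset.card_powersetCard]
  refine Finset.card_bij' (fun S _ => S.erase i) (fun B _ => insert i B) ?_ ?_ ?_ ?_
  · intro S hS
    simp only [Finset.mem_filter, Finset.mem_powersetCard] at hS ⊢
    refine ⟨Finset.erase_subset_erase i hS.1.1, ?_⟩
    rw [Finset.card_erase_of_mem hS.2, hS.1.2]
    omega
  · intro B hB
    simp only [Finset.mem_filter, Finset.mem_powersetCard] at hB ⊢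
    have hiB : i ∉ B := fun h => (Finset.mem_erase.1 (hB.1 h)).1 rfl
    refine ⟨⟨Finset.subset_univ _, ?_⟩, Finset.mem_insert_self _ _⟩
    rw [Finset.card_insert_of_notMem hiB, hB.2]
  · intro S hS
    simp only [Finset.mem_filter] at hS
    exact Finset.insert_erase hS.2
  · intro B hB
    simp only [Finset.mem_powersetCard] at hB
    exact Finset.erase_insert (fun h => (Finset.mem_erase.1 (hB.1 h)).1 rfl)

/-- Drawing a subset `S` uniformly at random from the `s`-element subsets of a
nonempty finite index set `T`, the expected optimal `k`-means value of the
subcollection `{x_i}_{i ∈ S}` is at most the optimal `k`-means value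
`val(T-IP)` of the full data set. -/
theorem expected_kmeansVal_subset_le_kmeansVal {m : ℕ} {T : Type*} [Fintype T] [Nonempty T]
    (k s : ℕ) (hk : 1 ≤ k) (hs : s ≤ Fintype.card T)
    (x : T → EuclideanSpace ℝ (Fin m)) :
    ((Fintype.card T).choose s : ℝ)⁻¹ *
        ∑ S ∈ Finset.powersetCard s (Finset.univ : Finset T),
          kmeansVal k (fun i : ↥S => x i)
      ≤ kmeansVal k x := by
  classical
  haveI : Nonempty (Fin k) := ⟨⟨0, hk⟩⟩
  have hN0 : 0 < Fintype.card T := Fintype.card_pos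
  have hkm_nonneg : 0 ≤ kmeansVal k x := by
    rw [kmeansVal]
    exact le_ciInf fun c => by positivity
  rcases s with _ | s'
  · rw [Finset.powersetCard_zero, Finset.sum_singleton]
    have h0 : kmeansVal k (fun i : ↥(∅ : Finset T) => x i) = 0 := by
      rw [kmeansVal]
      have hb : ∀ c : ↥(∅ : Finset T) → Fin k,
          (Fintype.card ↥(∅ : Finset T) : ℝ)⁻¹ *
            ∑ t : Fin k,
              ∑ i ∈ Finset.univ.filter (fun i => c i = t),
                ‖x ↑i - ((Finset.univ.filter (fun j => c j = t)).card : ℝ)⁻¹ •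
                  ∑ j ∈ Finset.univ.filter (fun j => c j = t), x ↑j‖ ^ 2 = 0 := by
        intro c
        simp
      haveI : Nonempty (↥(∅ : Finset T) → Fin k) :=
        ⟨fun i => absurd i.2 (Finset.notMem_empty _)⟩
      rw [iInf_congr hb, ciInf_const]
    rw [h0, mul_zero]
    exact hkm_nonneg
  · -- main case s = s' + 1
    conv_rhs => rw [kmeansVal]
    refine le_ciInf fun c => ?_
    set μ : Fin k → EuclideanSpace ℝ (Fin m) := fun t =>
      ((Finset.univ.filter (fun j => c j = t)).card : ℝ)⁻¹ •
        ∑ j ∈ Finset.univ.filter (fun j => c j = t), x j with hμ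
    set g : T → ℝ := fun i => ‖x i - μ (c i)‖ ^ 2 with hg
    have hg0 : ∀ i, 0 ≤ g i := fun i => by rw [hg]; positivity
    have step3 : ∀ S ∈ Finset.powersetCard (s' + 1) (Finset.univ : Finset T),
        kmeansVal k (fun i : ↥S => x i) ≤ ((s' + 1 : ℕ) : ℝ)⁻¹ * ∑ i ∈ S, g i := by
      intro S hS
      have hScard : S.card = s' + 1 := (Finset.mem_powersetCard.1 hS).2
      rw [kmeansVal]
      refine le_trans (ciInf_le ⟨0, ?_⟩ (fun i : ↥S => c ↑i)) ?_
      · rintro v ⟨c', rfl⟩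
        dsimp only
        positivity
      · rw [Fintype.card_coe, hScard]
        have hsum : ∑ i ∈ S, g i = ∑ t : Fin k,
            ∑ i ∈ Finset.univ.filter (fun i : ↥S => c ↑i = t), g ↑i := by
          rw [← Finset.sum_coe_sort S g]
          exact (Finset.sum_fiberwise _ _ _).symm
        rw [hsum]
        refine mul_le_mul_of_nonneg_left (Finset.sum_le_sum fun t _ => ?_) (by positivity)
        refine le_trans (sum_norm_sub_centroid_le
          (Finset.univ.filter (fun i : ↥S => c ↑i = t)) (fun i : ↥S => x ↑i) (μ t))
          (le_of_eq ?_)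
        refine Finset.sum_congr rfl fun i hi => ?_
        simp only [Finset.mem_filter] at hi
        rw [hg]
        dsimp only
        rw [hi.2]
    have hfib : ∑ t : Fin k, ∑ i ∈ Finset.univ.filter (fun i => c i = t),
        ‖x i - μ t‖ ^ 2 = ∑ i : T, g i := by
      rw [← Finset.sum_fiberwise Finset.univ c g]
      refine Finset.sum_congr rfl fun t _ => Finset.sum_congr rfl fun i hi => ?_
      simp only [Finset.mem_filter] at hi
      rw [hg]
      dsimp only
      rw [hi.2]
    have hexch : ∑ S ∈ Finset.powersetCard (s' + 1) (Finset.univ : Finset T), ∑ i ∈ S, g i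
        = ∑ i : T, ((((Finset.powersetCard (s' + 1) (Finset.univ : Finset T)).filter
            (fun S => i ∈ S)).card : ℝ) * g i) := by
      calc ∑ S ∈ Finset.powersetCard (s' + 1) (Finset.univ : Finset T), ∑ i ∈ S, g i
          = ∑ S ∈ Finset.powersetCard (s' + 1) (Finset.univ : Finset T),
              ∑ i : T, if i ∈ S then g i else 0 := by
            refine Finset.sum_congr rfl fun S _ => ?_
            rw [Finset.sum_ite_mem, Finset.univ_inter]
        _ = ∑ i : T, ∑ S ∈ Finset.powersetCard (s' + 1) (Finset.univ : Finset T),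
              if i ∈ S then g i else 0 := Finset.sum_comm
        _ = _ := by
            refine Finset.sum_congr rfl fun i _ => ?_
            rw [← Finset.sum_filter, Finset.sum_const, nsmul_eq_mul]
    have hkey : Fintype.card T * ((Fintype.card T - 1).choose s')
        = (Fintype.card T).choose (s' + 1) * (s' + 1) := by
      obtain ⟨p, hp⟩ : ∃ p, Fintype.card T = p + 1 :=
        ⟨Fintype.card T - 1, (Nat.succ_pred_eq_of_pos hN0).symm⟩
      rw [hp]
      simpa using Nat.add_one_mul_choose_eq p s'
    have hC : (0 : ℝ) < ((Fintype.card T).choose (s' + 1) : ℝ) := by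
      exact_mod_cast Nat.choose_pos hs
    have hcoef : (((Fintype.card T).choose (s' + 1) : ℕ) : ℝ)⁻¹ * (((s' + 1 : ℕ)) : ℝ)⁻¹ *
        (((Fintype.card T - 1).choose s' : ℕ) : ℝ) = ((Fintype.card T : ℕ) : ℝ)⁻¹ := by
      have hkeyR : ((Fintype.card T : ℕ) : ℝ) * (((Fintype.card T - 1).choose s' : ℕ) : ℝ)
          = (((Fintype.card T).choose (s' + 1) : ℕ) : ℝ) * (((s' + 1 : ℕ)) : ℝ) := by
        exact_mod_cast hkey
      have h3 : (0 : ℝ) < ((Fintype.card T : ℕ) : ℝ) := by exact_mod_cast hN0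
      field_simp
      push_cast at hkeyR ⊢
      linarith [hkeyR]
    have hmid : (((Fintype.card T).choose (s' + 1) : ℕ) : ℝ)⁻¹ *
        ∑ S ∈ Finset.powersetCard (s' + 1) (Finset.univ : Finset T),
          (((s' + 1 : ℕ) : ℝ)⁻¹ * ∑ i ∈ S, g i)
        = ((Fintype.card T : ℕ) : ℝ)⁻¹ * ∑ i : T, g i := by
      rw [← Finset.mul_sum, hexch]
      have hcards : ∀ i ∈ (Finset.univ : Finset T),
          ((((Finset.powersetCard (s' + 1) (Finset.univ : Finset T)).filter
            (fun S => i ∈ S)).card : ℝ) * g i)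
          = (((Fintype.card T - 1).choose s' : ℕ) : ℝ) * g i := by
        intro i _
        rw [card_powersetCard_filter_mem]
      rw [Finset.sum_congr rfl hcards, ← Finset.mul_sum, ← hcoef]
      ring
    refine le_trans (le_trans
      (mul_le_mul_of_nonneg_left (Finset.sum_le_sum step3) (by positivity))
      (le_of_eq hmid)) (le_of_eq ?_)
    rw [← hfib]
end

section
/- Let {x_i}_{i∈T} ⊆ ℝ^m and let C_1 ⊔ ⋯ ⊔ C_k = T be a partition of T into k nonempty parts. Then the matrix X = Σ_{t=1}^k (1/|C_t|) 1_{C_t} 1_{C_t}^⊤ satisfies X1 = 1, tr(X) = k, X is entrywise nonnegative and positive semidefinite, and moreover (1/(2|T|)) tr(D_T X) equals the k-means objective value (1/|T|) Σ_{t∈[k]} Σ_{i∈C_t} ‖x_i − (1/|C_t|) Σ_{j∈C_t} x_j‖² of the partition. -/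
open scoped BigOperators

private lemma cluster_identity {T : Type*} {E : Type*} [NormedAddCommGroup E]
    [InnerProductSpace ℝ E] (C : Finset T) (hC : C.Nonempty) (x : T → E) :
    ∑ i ∈ C, ∑ j ∈ C, ‖x i - x j‖ ^ 2
      = 2 * (C.card : ℝ) * ∑ i ∈ C, ‖x i - ((C.card : ℝ)⁻¹ • ∑ j ∈ C, x j)‖ ^ 2 := by
  have hn : (C.card : ℝ) ≠ 0 := Nat.cast_ne_zero.mpr (Finset.card_pos.mpr hC).ne'
  set n : ℝ := (C.card : ℝ) with hn'
  set S : E := ∑ j ∈ C, x j with hS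
  set Q : ℝ := ∑ i ∈ C, ‖x i‖ ^ 2 with hQ
  have h1 : ∑ i ∈ C, ∑ j ∈ C, ‖x i - x j‖ ^ 2 = 2 * n * Q - 2 * inner ℝ S S := by
    simp_rw [norm_sub_sq_real, Finset.sum_add_distrib, Finset.sum_sub_distrib,
      Finset.sum_const, nsmul_eq_mul, ← Finset.mul_sum,
      ← inner_sum, ← sum_inner, ← hS, ← hQ, ← hn']
    ring
  have h2 : ∑ i ∈ C, ‖x i - (n⁻¹ • S)‖ ^ 2 = Q - n⁻¹ * inner ℝ S S := by
    have h3 : ‖(n : ℝ)⁻¹ • S‖ ^ 2 = n⁻¹ * n⁻¹ * inner ℝ S S := by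
      rw [norm_smul, mul_pow, real_inner_self_eq_norm_sq, Real.norm_eq_abs, abs_inv,
        abs_of_nonneg (by rw [hn']; positivity), sq]
    simp_rw [norm_sub_sq_real, Finset.sum_add_distrib, Finset.sum_sub_distrib,
      Finset.sum_const, nsmul_eq_mul, real_inner_smul_right, ← Finset.mul_sum,
      ← sum_inner, ← hS, ← hQ, ← hn', h3]
    field_simp
    ring
  rw [h1, h2]
  field_simp

/-- Given points `x : T → ℝ^m` and a partition of `T` into `k` nonempty parts
`C 0, …, C (k-1)`, the matrix `X = ∑_t |C t|⁻¹ • 1_{C t} 1_{C t}ᵀ` is feasible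
for the Peng–Wei semidefinite relaxation (`X1 = 1`, `tr X = k`, `X` entrywise
nonnegative and positive semidefinite), and its SDP objective value
`(2|T|)⁻¹ tr(D X)` equals the `k`-means objective value of the partition. -/
theorem partition_matrix_feasible_and_value {m k : ℕ} {T : Type*} [Fintype T] [DecidableEq T]
    (x : T → EuclideanSpace ℝ (Fin m)) (C : Fin k → Finset T)
    (hdisj : ∀ t t', t ≠ t' → Disjoint (C t) (C t'))
    (hcover : Finset.univ.biUnion C = (Finset.univ : Finset T))
    (hne : ∀ t, (C t).Nonempty)
    (X : Matrix T T ℝ)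
    (hX : X = ∑ t : Fin k, ((C t).card : ℝ)⁻¹ •
      Matrix.vecMulVec (fun i => if i ∈ C t then (1 : ℝ) else 0)
        (fun j => if j ∈ C t then (1 : ℝ) else 0)) :
    X.mulVec (fun _ => (1 : ℝ)) = (fun _ => (1 : ℝ)) ∧
    X.trace = (k : ℝ) ∧
    (∀ i j, 0 ≤ X i j) ∧
    X.PosSemidef ∧
    (2 * (Fintype.card T : ℝ))⁻¹ * ((Matrix.of fun i j => ‖x i - x j‖ ^ 2) * X).trace
      = (Fintype.card T : ℝ)⁻¹ *
          ∑ t : Fin k, ∑ i ∈ C t, ‖x i - ((C t).card : ℝ)⁻¹ • ∑ j ∈ C t, x j‖ ^ 2 := by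
  have hXe : ∀ i j, X i j = ∑ t : Fin k, ((C t).card : ℝ)⁻¹ *
      ((if i ∈ C t then (1 : ℝ) else 0) * (if j ∈ C t then (1 : ℝ) else 0)) := by
    intro i j
    rw [hX]
    simp [Matrix.sum_apply, Matrix.vecMulVec_apply]
  have hcard : ∀ t, ((C t).card : ℝ) ≠ 0 := fun t =>
    Nat.cast_ne_zero.mpr (Finset.card_pos.mpr (hne t)).ne'
  have hone : ∀ i : T, ∑ t : Fin k, (if i ∈ C t then (1 : ℝ) else 0) = 1 := by
    intro i
    obtain ⟨t0, -, ht0⟩ := Finset.mem_biUnion.mp (hcover ▸ Finset.mem_univ i)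
    rw [Finset.sum_eq_single t0]
    · simp [ht0]
    · intro t _ hne'
      have : i ∉ C t := fun h => Finset.disjoint_left.mp (hdisj t t0 hne') h ht0
      simp [this]
    · simp
  have hind : ∀ t (f : T → ℝ),
      ∑ j : T, (if j ∈ C t then (1 : ℝ) else 0) * f j = ∑ j ∈ C t, f j := by
    intro t f
    simp_rw [ite_mul, one_mul, zero_mul, Finset.sum_ite_mem, Finset.univ_inter]
  have hindc : ∀ t, ∑ j : T, (if j ∈ C t then (1 : ℝ) else 0) = ((C t).card : ℝ) := by
    intro t; simp [Finset.sum_ite_mem]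
  refine ⟨?_, ?_, ?_, ?_, ?_⟩
  · funext i
    simp only [Matrix.mulVec, dotProduct, mul_one]
    simp_rw [hXe]
    rw [Finset.sum_comm]
    calc ∑ t : Fin k, ∑ j : T, ((C t).card : ℝ)⁻¹ *
          ((if i ∈ C t then (1:ℝ) else 0) * (if j ∈ C t then (1:ℝ) else 0))
        = ∑ t : Fin k, (if i ∈ C t then (1:ℝ) else 0) := by
          refine Finset.sum_congr rfl fun t _ => ?_
          rw [← Finset.mul_sum, ← Finset.mul_sum, hindc t,
            mul_comm ((if i ∈ C t then (1:ℝ) else 0)) _, ← mul_assoc,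
            inv_mul_cancel₀ (hcard t), one_mul]
      _ = 1 := hone i
  · unfold Matrix.trace
    simp only [Matrix.diag_apply]
    simp_rw [hXe]
    rw [Finset.sum_comm]
    have hii : ∀ (t : Fin k) (i : T), (if i ∈ C t then (1:ℝ) else 0) *
        (if i ∈ C t then (1:ℝ) else 0) = (if i ∈ C t then (1:ℝ) else 0) := by
      intro t i; split <;> simp
    calc ∑ t : Fin k, ∑ i : T, ((C t).card : ℝ)⁻¹ *
          ((if i ∈ C t then (1:ℝ) else 0) * (if i ∈ C t then (1:ℝ) else 0))
        = ∑ t : Fin k, (1 : ℝ) := by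
          refine Finset.sum_congr rfl fun t _ => ?_
          simp_rw [hii, ← Finset.mul_sum, hindc t, inv_mul_cancel₀ (hcard t)]
      _ = (k : ℝ) := by simp
  · intro i j
    rw [hXe]
    apply Finset.sum_nonneg
    intro t _
    positivity
  · rw [Matrix.posSemidef_iff_dotProduct_mulVec]
    constructor
    · ext i j
      simp only [Matrix.conjTranspose_apply, star_trivial, hXe]
      refine Finset.sum_congr rfl fun t _ => ?_
      ring
    · intro y
      have hy : star y = y := funext fun i => star_trivial _
      rw [hy]
      have key : dotProduct y (X.mulVec y)
          = ∑ t : Fin k, ((C t).card : ℝ)⁻¹ * (∑ i ∈ C t, y i) ^ 2 := by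
        simp only [dotProduct, Matrix.mulVec]
        simp_rw [hXe, Finset.sum_mul, Finset.mul_sum]
        conv_lhs => enter [2, i]; rw [Finset.sum_comm]
        rw [Finset.sum_comm]
        refine Finset.sum_congr rfl fun t _ => ?_
        have : ∀ i j : T, y i * (((C t).card : ℝ)⁻¹ *
            ((if i ∈ C t then (1:ℝ) else 0) * (if j ∈ C t then (1:ℝ) else 0)) * y j)
            = ((C t).card : ℝ)⁻¹ * (((if i ∈ C t then (1:ℝ) else 0) * y i) *
              ((if j ∈ C t then (1:ℝ) else 0) * y j)) := by
          intro i j; ring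
        simp_rw [this, ← Finset.mul_sum, ← Finset.sum_mul, hind, sq]
      rw [key]
      apply Finset.sum_nonneg
      intro t _
      positivity
  · have htr : ((Matrix.of fun i j => ‖x i - x j‖ ^ 2) * X).trace
        = ∑ t : Fin k, ((C t).card : ℝ)⁻¹ *
            ∑ i ∈ C t, ∑ j ∈ C t, ‖x i - x j‖ ^ 2 := by
      unfold Matrix.trace
      simp only [Matrix.diag_apply, Matrix.mul_apply, Matrix.of_apply]
      simp_rw [hXe, Finset.mul_sum]
      conv_lhs => enter [2, i]; rw [Finset.sum_comm]
      rw [Finset.sum_comm]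
      refine Finset.sum_congr rfl fun t _ => ?_
      have : ∀ i j : T, ‖x i - x j‖ ^ 2 * (((C t).card : ℝ)⁻¹ *
          ((if j ∈ C t then (1:ℝ) else 0) * (if i ∈ C t then (1:ℝ) else 0)))
          = ((C t).card : ℝ)⁻¹ * ((if i ∈ C t then (1:ℝ) else 0) *
            ((if j ∈ C t then (1:ℝ) else 0) * ‖x i - x j‖ ^ 2)) := by
        intro i j; ring
      simp_rw [this, ← Finset.mul_sum, hind]
    rw [htr]
    have : ∀ t : Fin k, ((C t).card : ℝ)⁻¹ * ∑ i ∈ C t, ∑ j ∈ C t, ‖x i - x j‖ ^ 2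
        = 2 * ∑ i ∈ C t, ‖x i - ((C t).card : ℝ)⁻¹ • ∑ j ∈ C t, x j‖ ^ 2 := by
      intro t
      rw [cluster_identity (C t) (hne t) x]
      field_simp
    simp_rw [this, ← Finset.mul_sum]
    set N : ℝ := (Fintype.card T : ℝ)
    set W : ℝ := ∑ t : Fin k, ∑ i ∈ C t, ‖x i - ((C t).card : ℝ)⁻¹ • ∑ j ∈ C t, x j‖ ^ 2
    rw [mul_inv]
    ring
end

section
/- Let M be an s×s real symmetric matrix and k ≥ 1. Define F(M) = max |tr(MX)| over all s×s real symmetric matrices X with X1 = 1, tr(X) = k, X entrywise nonnegative, and X positive semidefinite. Then F(M) ≤ min{‖M‖_*, k·‖M‖_{2→2}}, where ‖·‖_* is the nuclear norm (sum of singular values) and ‖·‖_{2→2} is the spectral norm (largest singular value). -/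
open scoped BigOperators

/-- The spectral norm (largest singular value) of a real matrix, realized as
the operator norm of the induced linear map between Euclidean spaces. -/
noncomputable def specNorm {α β : Type*} [Fintype α] [Fintype β] [DecidableEq β]
    (A : Matrix α β ℝ) : ℝ :=
  ‖LinearMap.toContinuousLinearMap (Matrix.toEuclideanLin A)‖

/-- The nuclear norm (sum of singular values) of a real square matrix:
the singular values are the square roots of the eigenvalues of `MᴴM`. -/
noncomputable def nuclearNorm {n : Type*} [Fintype n] [DecidableEq n]
    (M : Matrix n n ℝ) : ℝ :=
  ∑ i, Real.sqrt ((Matrix.isHermitian_conjTranspose_mul_self M).eigenvalues i)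

open Matrix in
lemma trace_unitary_conj {n : Type*} [Fintype n] [DecidableEq n]
    (U : Matrix.unitaryGroup n ℝ) (d : n → ℝ) :
    ((U : Matrix n n ℝ) * Matrix.diagonal d * star (U : Matrix n n ℝ)).trace = ∑ i, d i := by
  rw [Matrix.trace_mul_cycle,
    (Matrix.mem_unitaryGroup_iff').mp U.2, Matrix.one_mul, Matrix.trace_diagonal]

open Matrix MatrixOrder in
lemma nuclearNorm_eq_sum_abs_eigenvalues {n : Type*} [Fintype n] [DecidableEq n]
    {M : Matrix n n ℝ} (hM : M.IsHermitian) :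
    nuclearNorm M = ∑ i, |hM.eigenvalues i| := by
  rw [nuclearNorm]
  set lam := hM.eigenvalues with hlam
  set U := hM.eigenvectorUnitary with hU
  have hUU : star (U : Matrix n n ℝ) * (U : Matrix n n ℝ) = 1 :=
    (Matrix.mem_unitaryGroup_iff').mp U.2
  have hconj : ∀ d : n → ℝ,
      ((U : Matrix n n ℝ) * diagonal d * star (U : Matrix n n ℝ)) *
        ((U : Matrix n n ℝ) * diagonal d * star (U : Matrix n n ℝ)) =
      (U : Matrix n n ℝ) * diagonal (fun i => d i * d i) * star (U : Matrix n n ℝ) := by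
    intro d
    calc ((U : Matrix n n ℝ) * diagonal d * star (U : Matrix n n ℝ)) *
          ((U : Matrix n n ℝ) * diagonal d * star (U : Matrix n n ℝ))
        = (U : Matrix n n ℝ) * diagonal d *
            (star (U : Matrix n n ℝ) * (U : Matrix n n ℝ)) *
            (diagonal d * star (U : Matrix n n ℝ)) := by
          simp only [Matrix.mul_assoc]
      _ = (U : Matrix n n ℝ) * (diagonal d * diagonal d) * star (U : Matrix n n ℝ) := by
          rw [hUU]; simp only [Matrix.mul_one, Matrix.mul_assoc]
      _ = _ := by rw [diagonal_mul_diagonal]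
  have hpsd : PosSemidef (Mᵀ * M) := by
    have := posSemidef_conjTranspose_mul_self M
    rwa [conjTranspose_eq_transpose_of_trivial] at this
  set B : Matrix n n ℝ :=
    (U : Matrix n n ℝ) * diagonal (fun i => |lam i|) * star (U : Matrix n n ℝ) with hB
  have hBpsd : PosSemidef B :=
    PosSemidef.mul_mul_conjTranspose_same
      (posSemidef_diagonal_iff.mpr fun i => abs_nonneg _) _
  have hMT : Mᵀ = M := by
    have := hM.eq
    rwa [conjTranspose_eq_transpose_of_trivial] at this
  have hspec : M = (U : Matrix n n ℝ) * diagonal lam * star (U : Matrix n n ℝ) := by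
    have := hM.spectral_theorem
    have hco : (RCLike.ofReal ∘ lam : n → ℝ) = lam := rfl
    rwa [hco] at this
  have hsq : B ^ 2 = Mᵀ * M := by
    rw [hMT, pow_two, hB, hconj]
    conv_rhs => rw [hspec]
    rw [hconj]
    congr 2
    ext i
    simp [abs_mul_abs_self]
  have hBsqrt : B = CFC.sqrt (Mᵀ * M) := by
    exact (CFC.sqrt_unique (by simpa [pow_two] using hsq) hBpsd.nonneg).symm
  have htr1 : (CFC.sqrt (Mᵀ * M)).trace
      = ∑ i, Real.sqrt ((Matrix.isHermitian_conjTranspose_mul_self M).eigenvalues i) := by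
    have hTT : Mᵀ * M = Mᴴ * M := by rw [conjTranspose_eq_transpose_of_trivial]
    rw [hTT, CFC.sqrt_eq_cfc, cfc_nnreal_eq_real _ (Mᴴ * M) (posSemidef_conjTranspose_mul_self M).nonneg,
      (Matrix.isHermitian_conjTranspose_mul_self M).cfc_eq, IsHermitian.cfc,
      Unitary.conjStarAlgAut_apply]
    rw [trace_unitary_conj]
    refine Finset.sum_congr rfl fun i _ => ?_
    simp only [Function.comp_apply, Real.coe_sqrt, Real.coe_toNNReal']
    rw [max_eq_left ((posSemidef_conjTranspose_mul_self M).eigenvalues_nonneg i)]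
    rfl
  have htr2 : B.trace = ∑ i, |lam i| := trace_unitary_conj U _
  rw [← htr1, ← hBsqrt, htr2]

open Matrix in
lemma abs_eigenvalue_le_specNorm {n : Type*} [Fintype n] [DecidableEq n]
    {M : Matrix n n ℝ} (hM : M.IsHermitian) (i : n) :
    |hM.eigenvalues i| ≤ specNorm M := by
  set v := hM.eigenvectorBasis i with hv
  have hnorm : ‖v‖ = 1 := hM.eigenvectorBasis.orthonormal.1 i
  have happ : (LinearMap.toContinuousLinearMap (Matrix.toEuclideanLin M)) v
      = hM.eigenvalues i • v := by
    apply (WithLp.equiv 2 (n → ℝ)).injective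
    simp only [LinearMap.coe_toContinuousLinearMap', WithLp.equiv_apply,
      Matrix.piLp_ofLp_toEuclideanLin]
    rw [Matrix.toLin'_apply]
    have := hM.mulVec_eigenvectorBasis i
    simpa using this
  have h1 : ‖(LinearMap.toContinuousLinearMap (Matrix.toEuclideanLin M)) v‖ ≤ specNorm M * ‖v‖ :=
    ContinuousLinearMap.le_opNorm _ v
  rw [happ, norm_smul, hnorm, mul_one, mul_one] at h1
  simpa using h1

/-- For a real symmetric `s × s` matrix `M` and `k ≥ 1`, the quantity
`F(M) = max |tr(MX)|` over all symmetric `X` with `X1 = 1`, `tr X = k`,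
`X` entrywise nonnegative and positive semidefinite, is at most
`min(‖M‖_*, k‖M‖_{2→2})`. -/
theorem F_le_min_nuclear_spectral {s k : ℕ} (hk : 1 ≤ k)
    (M : Matrix (Fin s) (Fin s) ℝ) (hM : M.IsSymm) :
    sSup {v : ℝ | ∃ X : Matrix (Fin s) (Fin s) ℝ,
        X.PosSemidef ∧ (∀ i j, 0 ≤ X i j) ∧
        X.mulVec (fun _ => (1 : ℝ)) = (fun _ => (1 : ℝ)) ∧ X.trace = (k : ℝ) ∧
        v = |(M * X).trace|}
      ≤ min (nuclearNorm M) ((k : ℝ) * specNorm M) := by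
  classical
  open Matrix in
  have hMh : M.IsHermitian := by
    rw [Matrix.IsHermitian, Matrix.conjTranspose_eq_transpose_of_trivial]
    exact hM
  have hmin_nonneg : 0 ≤ min (nuclearNorm M) ((k : ℝ) * specNorm M) :=
    le_min (Finset.sum_nonneg fun i _ => Real.sqrt_nonneg _)
      (mul_nonneg (Nat.cast_nonneg k) (norm_nonneg _))
  apply Real.sSup_le _ hmin_nonneg
  rintro w ⟨X, hX, hXnn, hX1, hXtr, rfl⟩
  set lam := hMh.eigenvalues with hlam
  set N : Matrix (Fin s) (Fin s) ℝ :=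
    star (hMh.eigenvectorUnitary : Matrix (Fin s) (Fin s) ℝ) * X *
      (hMh.eigenvectorUnitary : Matrix (Fin s) (Fin s) ℝ) with hN
  have hNc : ∀ i, N i i
      = ∑ p, hMh.eigenvectorBasis i p * ∑ q, X p q * hMh.eigenvectorBasis i q := by
    intro i
    simp only [hN, Matrix.mul_apply, Matrix.star_apply, star_trivial,
      Matrix.IsHermitian.eigenvectorUnitary_apply, Finset.sum_mul,
      Finset.mul_sum]
    rw [Finset.sum_comm]
    apply Finset.sum_congr rfl
    intro p _
    apply Finset.sum_congr rfl
    intro q _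
    ring
  have hspec : M = (hMh.eigenvectorUnitary : Matrix (Fin s) (Fin s) ℝ) * diagonal lam *
      star (hMh.eigenvectorUnitary : Matrix (Fin s) (Fin s) ℝ) := by
    have := hMh.spectral_theorem
    have hco : (RCLike.ofReal ∘ lam : Fin s → ℝ) = lam := rfl
    rwa [hco] at this
  have htr : (M * X).trace = ∑ i, lam i * N i i := by
    conv_lhs => rw [hspec]
    calc ((hMh.eigenvectorUnitary : Matrix (Fin s) (Fin s) ℝ) * diagonal lam *
            star (hMh.eigenvectorUnitary : Matrix (Fin s) (Fin s) ℝ) * X).trace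
        = (((hMh.eigenvectorUnitary : Matrix (Fin s) (Fin s) ℝ) * diagonal lam) *
            (star (hMh.eigenvectorUnitary : Matrix (Fin s) (Fin s) ℝ) * X)).trace := by
          rw [Matrix.mul_assoc]
      _ = ((star (hMh.eigenvectorUnitary : Matrix (Fin s) (Fin s) ℝ) * X) *
            ((hMh.eigenvectorUnitary : Matrix (Fin s) (Fin s) ℝ) * diagonal lam)).trace :=
          Matrix.trace_mul_comm _ _
      _ = (N * diagonal lam).trace := by rw [hN]; simp only [Matrix.mul_assoc]
      _ = ∑ i, lam i * N i i := by
          simp [Matrix.trace, Matrix.diag, Matrix.mul_diagonal, mul_comm]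
  have hsum : ∑ i, N i i = (k : ℝ) := by
    have h2 : N.trace = X.trace := by
      rw [hN, Matrix.trace_mul_cycle,
        (Matrix.mem_unitaryGroup_iff).mp hMh.eigenvectorUnitary.2, Matrix.one_mul]
    have h3 : ∑ i, N i i = X.trace := by simpa [Matrix.trace, Matrix.diag] using h2
    rw [h3, hXtr]
  have hc0 : ∀ i, 0 ≤ N i i := by
    intro i
    rw [hNc i]
    have := hX.dotProduct_mulVec_nonneg (fun p => hMh.eigenvectorBasis i p)
    simpa [dotProduct, Matrix.mulVec, Finset.mul_sum] using this
  -- row and column sums of X are 1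
  have hrow : ∀ p, ∑ q, X p q = 1 := by
    intro p
    have := congrFun hX1 p
    simpa [Matrix.mulVec, dotProduct] using this
  have hXs : ∀ p q, X p q = X q p := by
    intro p q
    have := congrFun (congrFun hX.1 q) p
    simpa [Matrix.conjTranspose_apply] using this
  have hcol : ∀ q, ∑ p, X p q = 1 := by
    intro q
    calc ∑ p, X p q = ∑ p, X q p := Finset.sum_congr rfl fun p _ => hXs p q
      _ = 1 := hrow q
  -- each diagonal entry of N is at most 1
  have hc1 : ∀ i, N i i ≤ 1 := by
    intro i
    set v : Fin s → ℝ := fun p => hMh.eigenvectorBasis i p with hv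
    have hunit : ∑ p, v p ^ 2 = 1 := by
      have h := hMh.eigenvectorBasis.orthonormal.1 i
      have hinner : (inner ℝ (hMh.eigenvectorBasis i) (hMh.eigenvectorBasis i) : ℝ) = 1 := by
        rw [real_inner_self_eq_norm_mul_norm, h]; ring
      have := hinner
      rw [PiLp.inner_apply] at this
      simpa [pow_two] using this
    rw [hNc i]
    have hA1 : ∑ p, ∑ q, X p q * v p ^ 2 = 1 := by
      have hstep : ∀ p, ∑ q, X p q * v p ^ 2 = v p ^ 2 := by
        intro p; rw [← Finset.sum_mul, hrow p, one_mul]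
      rw [Finset.sum_congr rfl fun p _ => hstep p, hunit]
    have hB1 : ∑ p, ∑ q, X p q * v q ^ 2 = 1 := by
      rw [Finset.sum_comm]
      have hstep : ∀ q, ∑ p, X p q * v q ^ 2 = v q ^ 2 := by
        intro q; rw [← Finset.sum_mul, hcol q, one_mul]
      rw [Finset.sum_congr rfl fun q _ => hstep q, hunit]
    calc ∑ p, v p * ∑ q, X p q * v q
        = ∑ p, ∑ q, v p * (X p q * v q) := by simp [Finset.mul_sum]
      _ ≤ ∑ p, ∑ q, X p q * (v p ^ 2 + v q ^ 2) / 2 := by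
          apply Finset.sum_le_sum
          intro p _
          apply Finset.sum_le_sum
          intro q _
          nlinarith [hXnn p q, sq_nonneg (v p - v q)]
      _ = ∑ p, ∑ q, ((X p q * v p ^ 2) / 2 + (X p q * v q ^ 2) / 2) := by
          apply Finset.sum_congr rfl; intro p _
          apply Finset.sum_congr rfl; intro q _
          ring
      _ = (∑ p, ∑ q, X p q * v p ^ 2) / 2 + (∑ p, ∑ q, X p q * v q ^ 2) / 2 := by
          simp only [Finset.sum_add_distrib, Finset.sum_div]
      _ = 1 := by rw [hA1, hB1]; norm_num
  -- main estimate
  have hmain : |(M * X).trace| ≤ ∑ i, |lam i| * N i i := by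
    rw [htr]
    refine (Finset.abs_sum_le_sum_abs _ _).trans ?_
    apply Finset.sum_le_sum
    intro i _
    rw [abs_mul, abs_of_nonneg (hc0 i)]
  apply le_min
  · refine hmain.trans ?_
    rw [nuclearNorm_eq_sum_abs_eigenvalues hMh]
    apply Finset.sum_le_sum
    intro i _
    exact mul_le_of_le_one_right (abs_nonneg _) (hc1 i)
  · refine hmain.trans ?_
    calc ∑ i, |lam i| * N i i
        ≤ ∑ i, specNorm M * N i i := by
          apply Finset.sum_le_sum
          intro i _
          exact mul_le_mul_of_nonneg_right (abs_eigenvalue_le_specNorm hMh i) (hc0 i)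
      _ = specNorm M * ∑ i, N i i := by rw [Finset.mul_sum]
      _ = (k : ℝ) * specNorm M := by rw [hsum, mul_comm]
end

section
/- Let v ∈ ℝ^m be a unit vector, r ≥ 0, and let x_1, …, x_s ∈ ℝ^m satisfy x_i = ε_i r v + g_i with ε_i ∈ {+1, −1} and g_i ∈ ℝ^m. Let G be the m×s matrix whose i-th column is g_i. Then the value of the k-means semidefinite relaxation with k = 2 satisfies val(S-SDP) ≥ (1/s) Σ_{i=1}^s ‖(I − vv^⊤)x_i‖² − (2/s)‖G‖_{2→2}². -/
open scoped BigOperators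

section helpers
variable {m s : ℕ}

private lemma enorm_sq' {n : ℕ} (y : EuclideanSpace ℝ (Fin n)) : ‖y‖^2 = ∑ i, (y i)^2 := by
  rw [EuclideanSpace.norm_eq, Real.sq_sqrt (by positivity)]
  simp [sq_abs]

private lemma specNorm_bound' (G : Matrix (Fin m) (Fin s) ℝ) (w : Fin s → ℝ) :
    ∑ a, (G.mulVec w a)^2 ≤
      (‖LinearMap.toContinuousLinearMap (Matrix.toEuclideanLin G)‖)^2 * ∑ i, (w i)^2 := by
  set w' : EuclideanSpace ℝ (Fin s) := (WithLp.equiv 2 (Fin s → ℝ)).symm w with hw'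
  have h1 := (LinearMap.toContinuousLinearMap (Matrix.toEuclideanLin G)).le_opNorm w'
  have h2 : (LinearMap.toContinuousLinearMap (Matrix.toEuclideanLin G)) w'
      = (WithLp.equiv 2 (Fin m → ℝ)).symm (G.mulVec w) := by
    simp [Matrix.toEuclideanLin_apply, hw']
  rw [h2] at h1
  have h3 : ‖(WithLp.equiv 2 (Fin m → ℝ)).symm (G.mulVec w)‖^2 = ∑ a, (G.mulVec w a)^2 := by
    rw [enorm_sq']; rfl
  have h4 : ‖w'‖^2 = ∑ i, (w i)^2 := by rw [enorm_sq']; rfl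
  nlinarith [norm_nonneg w', norm_nonneg (LinearMap.toContinuousLinearMap (Matrix.toEuclideanLin G)),
    norm_nonneg ((WithLp.equiv 2 (Fin m → ℝ)).symm (G.mulVec w))]

private lemma quad_le_sum' {s : ℕ} (X : Matrix (Fin s) (Fin s) ℝ)
    (hsym : ∀ i j, X j i = X i j) (hnn : ∀ i j, 0 ≤ X i j)
    (hrow : ∀ i, ∑ j, X i j = 1) (w : Fin s → ℝ) :
    ∑ i, ∑ j, X i j * (w i * w j) ≤ ∑ i, (w i)^2 := by
  have hA : ∑ i, ∑ j, X i j * (w i)^2 = ∑ i, (w i)^2 := by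
    refine Finset.sum_congr rfl fun i _ => ?_
    rw [← Finset.sum_mul, hrow i, one_mul]
  have hB : ∑ i, ∑ j, X i j * (w j)^2 = ∑ i, (w i)^2 := by
    rw [Finset.sum_comm]
    refine Finset.sum_congr rfl fun j _ => ?_
    rw [← Finset.sum_mul]
    have h5 : ∑ i, X i j = ∑ i, X j i := Finset.sum_congr rfl fun i _ => hsym j i
    rw [h5, hrow j, one_mul]
  have key : ∑ i, ∑ j, X i j * (w i - w j)^2
      = ∑ i, ∑ j, X i j * (w i)^2 + ∑ i, ∑ j, X i j * (w j)^2
        - 2 * ∑ i, ∑ j, X i j * (w i * w j) := by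
    rw [← Finset.sum_add_distrib, Finset.mul_sum, ← Finset.sum_sub_distrib]
    refine Finset.sum_congr rfl fun i _ => ?_
    rw [← Finset.sum_add_distrib, Finset.mul_sum, ← Finset.sum_sub_distrib]
    refine Finset.sum_congr rfl fun j _ => ?_
    ring
  have hpos : 0 ≤ ∑ i, ∑ j, X i j * (w i - w j)^2 :=
    Finset.sum_nonneg fun i _ => Finset.sum_nonneg fun j _ =>
      mul_nonneg (hnn i j) (sq_nonneg _)
  rw [hA, hB] at key
  linarith

private lemma psd_quad_nonneg' {s : ℕ} (X : Matrix (Fin s) (Fin s) ℝ) (hX : X.PosSemidef)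
    (w : Fin s → ℝ) : 0 ≤ ∑ i, ∑ j, X i j * (w i * w j) := by
  have h := hX.dotProduct_mulVec_nonneg w
  simp only [star_trivial, dotProduct, Matrix.mulVec] at h
  calc (0:ℝ) ≤ ∑ i, w i * ∑ j, X i j * w j := h
    _ = ∑ i, ∑ j, X i j * (w i * w j) := by
        refine Finset.sum_congr rfl fun i _ => ?_
        rw [Finset.mul_sum]
        exact Finset.sum_congr rfl fun j _ => by ring

private lemma quadG_le' {m s : ℕ} (G : Matrix (Fin m) (Fin s) ℝ)
    (g : Fin s → EuclideanSpace ℝ (Fin m)) (hG : ∀ a i, G a i = g i a)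
    (X : Matrix (Fin s) (Fin s) ℝ) (hX : X.PosSemidef) :
    ∑ i, ∑ j, X i j * (inner ℝ (g i) (g j) : ℝ)
      ≤ (‖LinearMap.toContinuousLinearMap (Matrix.toEuclideanLin G)‖)^2 * X.trace := by
  obtain ⟨B, hB⟩ : ∃ B : Matrix (Fin s) (Fin s) ℝ, X = star B * B := by
    open scoped MatrixOrder in exact CStarAlgebra.nonneg_iff_eq_star_mul_self.mp hX.nonneg
  have hXij : ∀ i j, X i j = ∑ k, B k i * B k j := by
    intro i j
    rw [hB]
    simp [Matrix.mul_apply, Matrix.conjTranspose_apply, Matrix.star_eq_conjTranspose]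
  set h : Fin s → EuclideanSpace ℝ (Fin m) := fun k => ∑ i, B k i • g i with hh
  have hinner : ∀ k, (inner ℝ (h k) (h k) : ℝ)
      = ∑ i, ∑ j, B k i * B k j * (inner ℝ (g i) (g j) : ℝ) := by
    intro k
    rw [hh]
    simp only [sum_inner, inner_sum, real_inner_smul_left, real_inner_smul_right]
    exact Finset.sum_congr rfl fun i _ => Finset.sum_congr rfl fun j _ => by
      rw [real_inner_comm (g j) (g i)]; ring
  have hswap : ∑ k, (inner ℝ (h k) (h k) : ℝ)
      = ∑ i, ∑ j, X i j * (inner ℝ (g i) (g j) : ℝ) := by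
    simp only [hinner]
    rw [Finset.sum_comm]
    refine Finset.sum_congr rfl fun i _ => ?_
    rw [Finset.sum_comm]
    refine Finset.sum_congr rfl fun j _ => ?_
    rw [hXij i j, Finset.sum_mul]
  have hcoord : ∀ k, (inner ℝ (h k) (h k) : ℝ) = ∑ a, (G.mulVec (B k) a)^2 := by
    intro k
    rw [real_inner_self_eq_norm_sq]
    rw [EuclideanSpace.norm_eq, Real.sq_sqrt (by positivity)]
    refine Finset.sum_congr rfl fun a _ => ?_
    rw [Real.norm_eq_abs, sq_abs]
    congr 1
    have e1 : h k a = ∑ i, B k i * g i a :=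
      by simp [hh]
    rw [e1]
    simp only [Matrix.mulVec, dotProduct]
    exact Finset.sum_congr rfl fun i _ => by rw [hG]; ring
  have htr : X.trace = ∑ k, ∑ i, (B k i)^2 := by
    rw [Matrix.trace, Finset.sum_comm]
    refine Finset.sum_congr rfl fun i _ => ?_
    rw [Matrix.diag_apply, hXij i i]
    exact Finset.sum_congr rfl fun k _ => by ring
  rw [← hswap, htr, Finset.mul_sum]
  refine Finset.sum_le_sum fun k _ => ?_
  rw [hcoord k]
  exact specNorm_bound' G (B k)

private lemma proj_sq' {m : ℕ} (v : EuclideanSpace ℝ (Fin m)) (hv : ‖v‖ = 1) (c : ℝ)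
    (g0 : EuclideanSpace ℝ (Fin m)) :
    ‖(c • v + g0) - (inner ℝ (c • v + g0) v : ℝ) • v‖^2 = ‖g0‖^2 - (inner ℝ g0 v : ℝ)^2 := by
  have hvv : (inner ℝ v v : ℝ) = 1 := by
    rw [real_inner_self_eq_norm_sq, hv]; norm_num
  have h1 : (inner ℝ (c • v + g0) v : ℝ) = c + inner ℝ g0 v := by
    rw [inner_add_left, real_inner_smul_left, hvv]; ring
  rw [h1]
  have h2 : (c • v + g0) - (c + (inner ℝ g0 v : ℝ)) • v = g0 - (inner ℝ g0 v : ℝ) • v := by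
    rw [add_smul]; abel
  rw [h2, norm_sub_sq_real, real_inner_smul_right, norm_smul, mul_pow, hv]
  rw [Real.norm_eq_abs, sq_abs]
  ring


private lemma feasible_exists' {s : ℕ} (hs : 2 ≤ s) :
    ∃ X : Matrix (Fin s) (Fin s) ℝ, X.PosSemidef ∧ (∀ i j, 0 ≤ X i j) ∧
      X.mulVec (fun _ => (1:ℝ)) = (fun _ => (1:ℝ)) ∧ X.trace = 2 := by
  have hs' : (2:ℝ) ≤ (s:ℝ) := by exact_mod_cast hs
  have hs0 : (s:ℝ) ≠ 0 := by linarith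
  have hs1 : (s:ℝ) - 1 ≠ 0 := by linarith
  set d : ℝ := 2/(s:ℝ) with hdd
  set c : ℝ := ((s:ℝ)-2)/((s:ℝ)*((s:ℝ)-1)) with hcc
  have hc : 0 ≤ c := div_nonneg (by linarith) (by nlinarith)
  have hdc : d - c = 1/((s:ℝ)-1) := by rw [hdd, hcc]; field_simp; ring
  have hdc' : 0 ≤ d - c := by
    rw [hdc]
    have h9 : (0:ℝ) < (s:ℝ) - 1 := by linarith
    positivity
  refine ⟨Matrix.of fun i j => if i = j then d else c, Matrix.PosSemidef.of_dotProduct_mulVec_nonneg ?_ ?_, ?_, ?_, ?_⟩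
  · -- Hermitian
    ext i j
    simp only [Matrix.conjTranspose_apply, Matrix.of_apply, star_trivial]
    by_cases h : i = j
    · subst h; simp
    · simp [h, Ne.symm h]
  · -- quadratic form
    intro y
    set T := ∑ j, y j with hT
    have hmv : ∀ i, (Matrix.of fun i j => if i = j then d else c).mulVec y i
        = c * T + (d - c) * y i := by
      intro i
      simp only [Matrix.mulVec, dotProduct, Matrix.of_apply]
      have e1 : ∀ j, (if i = j then d else c) * y j
          = c * y j + (if i = j then (d-c) * y j else 0) := by
        intro j; split_ifs with h <;> ring
      rw [Finset.sum_congr rfl fun j _ => e1 j, Finset.sum_add_distrib,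
        Finset.sum_ite_eq Finset.univ i fun j => (d-c) * y j]
      simp [hT, Finset.mul_sum]
    simp only [star_trivial, dotProduct]
    have e2 : ∑ i, y i * (Matrix.of fun i j => if i = j then d else c).mulVec y i
        = c * (T * T) + (d - c) * ∑ i, (y i)^2 := by
      rw [Finset.sum_congr rfl fun i _ => by rw [hmv i]]
      have e3 : ∀ i, y i * (c * T + (d - c) * y i)
          = c * T * y i + (d - c) * (y i)^2 := fun i => by ring
      rw [Finset.sum_congr rfl fun i _ => e3 i, Finset.sum_add_distrib,
        ← Finset.mul_sum, ← Finset.mul_sum, ← hT]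
      ring
    rw [e2]
    have : 0 ≤ ∑ i, (y i)^2 := Finset.sum_nonneg fun i _ => sq_nonneg _
    nlinarith [mul_self_nonneg T]
  · -- entrywise nonneg
    intro i j
    simp only [Matrix.of_apply]
    split_ifs
    · linarith
    · exact hc
  · -- row sums
    funext i
    simp only [Matrix.mulVec, dotProduct, Matrix.of_apply, mul_one]
    have e1 : ∀ j, (if i = j then d else c) = c + (if i = j then d - c else 0) := by
      intro j; split_ifs <;> ring
    rw [Finset.sum_congr rfl fun j _ => e1 j, Finset.sum_add_distrib,
      Finset.sum_ite_eq Finset.univ i fun _ => d - c]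
    simp only [Finset.sum_const, Finset.card_univ, Fintype.card_fin, nsmul_eq_mul,
      Finset.mem_univ, if_true]
    rw [hdd, hcc]
    field_simp
    ring
  · -- trace
    simp only [Matrix.trace, Matrix.diag_apply, Matrix.of_apply, if_pos rfl, if_true,
      Finset.sum_const, Finset.card_univ, Fintype.card_fin, nsmul_eq_mul]
    rw [hdd]; field_simp

end helpers

/-- For data of the form `x i = ε i • (r • v) + g i` with `v` a unit vector
and `ε i = ±1`, the value of the `k = 2` semidefinite relaxation is bounded
below by `(1/s) ∑ᵢ ‖(I - vvᵀ) x i‖² - (2/s) ‖G‖²`, where `G` has `i`-th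
column `g i` and `(I - vvᵀ) x i = x i - ⟨x i, v⟩ v`. -/
theorem sdpVal_lower_bound {m s : ℕ}
    (v : EuclideanSpace ℝ (Fin m)) (hv : ‖v‖ = 1) (r : ℝ) (hr : 0 ≤ r)
    (ε : Fin s → ℝ) (hε : ∀ i, ε i = 1 ∨ ε i = -1)
    (g x : Fin s → EuclideanSpace ℝ (Fin m))
    (hx : ∀ i, x i = ε i • (r • v) + g i)
    (G : Matrix (Fin m) (Fin s) ℝ) (hG : G = Matrix.of fun a i => g i a) :
    (s : ℝ)⁻¹ * ∑ i, ‖x i - (inner ℝ (x i) v : ℝ) • v‖ ^ 2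
        - (2 / (s : ℝ)) * specNorm G ^ 2
      ≤ sdpVal 2 x := by
  classical
  have hε2 : ∀ i, ε i ^ 2 = 1 := fun i => by rcases hε i with h | h <;> rw [h] <;> norm_num
  have hG' : ∀ a i, G a i = g i a := fun a i => by rw [hG]; rfl
  have hx' : ∀ i, x i = (ε i * r) • v + g i := fun i => by rw [hx i, smul_smul]
  have hvv : (inner ℝ v v : ℝ) = 1 := by rw [real_inner_self_eq_norm_sq, hv]; norm_num
  have hNsp : specNorm G = ‖LinearMap.toContinuousLinearMap (Matrix.toEuclideanLin G)‖ := rfl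
  have hproj : ∀ i, ‖x i - (inner ℝ (x i) v : ℝ) • v‖^2 = ‖g i‖^2 - (inner ℝ (g i) v : ℝ)^2 := by
    intro i
    rw [hx' i]
    have hvv' : (inner ℝ v v : ℝ) = 1 := hvv
    have h1 : (inner ℝ ((ε i * r) • v + g i) v : ℝ) = ε i * r + inner ℝ (g i) v := by
      rw [inner_add_left, real_inner_smul_left, hvv']; ring
    rw [h1]
    have h2 : ((ε i * r) • v + g i) - (ε i * r + (inner ℝ (g i) v : ℝ)) • v
        = g i - (inner ℝ (g i) v : ℝ) • v := by
      rw [add_smul]; abel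
    rw [h2, norm_sub_sq_real, real_inner_smul_right, norm_smul, mul_pow, hv,
      Real.norm_eq_abs, sq_abs]
    ring
  rcases lt_or_ge s 2 with hs | hs
  · interval_cases s
    · -- s = 0
      have hzero : sdpVal 2 x = 0 := by
        unfold sdpVal
        convert Real.sInf_empty
        rw [Set.eq_empty_iff_forall_notMem]
        rintro b ⟨X, -, -, -, htr, -⟩
        have h0 : X.trace = 0 := by simp [Matrix.trace]
        rw [h0] at htr
        norm_num at htr
      rw [hzero]
      simp
    · -- s = 1
      have hzero : sdpVal 2 x = 0 := by
        unfold sdpVal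
        convert Real.sInf_empty
        rw [Set.eq_empty_iff_forall_notMem]
        rintro b ⟨X, -, -, hmul, htr, -⟩
        have h1 := congrFun hmul 0
        simp [Matrix.mulVec, dotProduct, Fin.sum_univ_one] at h1
        have h0 : X.trace = X 0 0 := by simp [Matrix.trace, Fin.sum_univ_one]
        rw [h0, h1] at htr
        norm_num at htr
      rw [hzero]
      have hma : ∀ a, G.mulVec (fun _ => (1:ℝ)) a = g 0 a := by
        intro a
        simp [Matrix.mulVec, dotProduct, Fin.sum_univ_one, hG']
      have hg0 : ‖g 0‖^2 ≤ specNorm G^2 := by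
        rw [enorm_sq' (g 0), hNsp]
        calc ∑ a, (g 0 a)^2
            = ∑ a, (G.mulVec (fun _ => (1:ℝ)) a)^2 := by
              refine Finset.sum_congr rfl fun a _ => ?_
              rw [hma a]
          _ ≤ (‖LinearMap.toContinuousLinearMap (Matrix.toEuclideanLin G)‖)^2
                * ∑ i : Fin 1, ((fun _ => (1:ℝ)) i)^2 := specNorm_bound' G _
          _ = (‖LinearMap.toContinuousLinearMap (Matrix.toEuclideanLin G)‖)^2 := by
              simp
      rw [Fin.sum_univ_one, hproj 0]
      have hsq := sq_nonneg (inner ℝ (g 0) v : ℝ)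
      have hN0 : (0:ℝ) ≤ specNorm G^2 := sq_nonneg _
      have hc1 : ((1:ℕ):ℝ) = 1 := by norm_num
      rw [hc1, inv_one, div_one, one_mul]
      linarith
  · -- main case : s ≥ 2
    have hs' : (2:ℝ) ≤ (s:ℝ) := by exact_mod_cast hs
    have hs0 : (0:ℝ) < (s:ℝ) := by linarith
    obtain ⟨X0, hpsd0, hnn0, hmul0, htr0⟩ := feasible_exists' hs
    unfold sdpVal
    apply le_csInf
    · exact ⟨_, X0, hpsd0, hnn0, hmul0, by rw [htr0]; norm_num, rfl⟩
    rintro b ⟨X, hpsd, hnn, hmul, htr, hb⟩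
    have hsym : ∀ i j, X j i = X i j := fun i j => by
      have h := hpsd.1.apply i j
      simpa using h
    have hrow : ∀ i, ∑ j, X i j = 1 := by
      intro i
      have h := congrFun hmul i
      simpa [Matrix.mulVec, dotProduct] using h
    have hcol : ∀ j, ∑ i, X i j = 1 := fun j =>
      (Finset.sum_congr rfl fun i _ => hsym j i).trans (hrow j)
    have hip : ∀ i j, (inner ℝ (x i) (x j) : ℝ)
        = (ε i*r)*(ε j*r) + (ε i*r)*(inner ℝ (g j) v : ℝ)
          + (ε j*r)*(inner ℝ (g i) v : ℝ) + (inner ℝ (g i) (g j) : ℝ) := by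
      intro i j
      rw [hx' i, hx' j]
      simp only [inner_add_left, inner_add_right, real_inner_smul_left,
        real_inner_smul_right, hvv]
      rw [real_inner_comm v (g j)]
      ring
    have hnorm : ∀ i, ‖x i‖^2
        = r^2 + 2*(r*(ε i * (inner ℝ (g i) v : ℝ))) + ‖g i‖^2 := by
      intro i
      have h := hip i i
      rw [real_inner_self_eq_norm_sq, real_inner_self_eq_norm_sq] at h
      linear_combination h + r^2 * hε2 i
    have S1 : ∑ i, ‖x i‖^2
        = (s:ℝ)*r^2 + 2*r*(∑ i, ε i * (inner ℝ (g i) v : ℝ)) + ∑ i, ‖g i‖^2 := by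
      have per : ∀ i, ‖x i‖^2 = r^2 + (2*r)*(ε i * (inner ℝ (g i) v : ℝ)) + ‖g i‖^2 := by
        intro i; rw [hnorm i]; ring
      rw [Finset.sum_congr rfl fun i _ => per i]
      rw [Finset.sum_add_distrib, Finset.sum_add_distrib, ← Finset.mul_sum,
        Finset.sum_const, Finset.card_univ, Fintype.card_fin, nsmul_eq_mul]
      try ring
    have hQx : ∑ i, ∑ j, X i j * (inner ℝ (x i) (x j) : ℝ)
        = r^2 * (∑ i, ∑ j, X i j * (ε i * ε j))
          + r * (∑ i, ∑ j, X i j * (ε i * (inner ℝ (g j) v : ℝ)))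
          + r * (∑ i, ∑ j, X i j * ((inner ℝ (g i) v : ℝ) * ε j))
          + ∑ i, ∑ j, X i j * (inner ℝ (g i) (g j) : ℝ) := by
      have per : ∀ i j, X i j * (inner ℝ (x i) (x j) : ℝ)
          = r^2*(X i j * (ε i * ε j)) + r*(X i j * (ε i * (inner ℝ (g j) v : ℝ)))
            + (r*(X i j * ((inner ℝ (g i) v : ℝ) * ε j)) + X i j * (inner ℝ (g i) (g j) : ℝ)) := by
        intro i j; rw [hip i j]; ring
      rw [Finset.sum_congr rfl fun i _ => Finset.sum_congr rfl fun j _ => per i j]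
      simp only [Finset.sum_add_distrib, ← Finset.mul_sum]
      ring
    have hQw : ∑ i, ∑ j, X i j * ((r * ε i + (inner ℝ (g i) v:ℝ)) * (r * ε j + (inner ℝ (g j) v:ℝ)))
        = r^2 * (∑ i, ∑ j, X i j * (ε i * ε j))
          + r * (∑ i, ∑ j, X i j * (ε i * (inner ℝ (g j) v : ℝ)))
          + r * (∑ i, ∑ j, X i j * ((inner ℝ (g i) v : ℝ) * ε j))
          + ∑ i, ∑ j, X i j * ((inner ℝ (g i) v:ℝ) * (inner ℝ (g j) v:ℝ)) := by
      have per : ∀ i j, X i j * ((r*ε i + (inner ℝ (g i) v:ℝ)) * (r*ε j + (inner ℝ (g j) v:ℝ)))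
          = r^2*(X i j * (ε i * ε j)) + r*(X i j * (ε i * (inner ℝ (g j) v:ℝ)))
            + (r*(X i j * ((inner ℝ (g i) v:ℝ) * ε j))
              + X i j * ((inner ℝ (g i) v:ℝ)*(inner ℝ (g j) v:ℝ))) := by
        intro i j; ring
      rw [Finset.sum_congr rfl fun i _ => Finset.sum_congr rfl fun j _ => per i j]
      simp only [Finset.sum_add_distrib, ← Finset.mul_sum]
      ring
    have hw2 : ∑ i, (r * ε i + (inner ℝ (g i) v:ℝ))^2
        = r^2*(s:ℝ) + 2*r*(∑ i, ε i * (inner ℝ (g i) v:ℝ)) + ∑ i, (inner ℝ (g i) v:ℝ)^2 := by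
      have per : ∀ i, (r * ε i + (inner ℝ (g i) v:ℝ))^2
          = r^2*(ε i^2) + ((2*r)*(ε i * (inner ℝ (g i) v:ℝ)) + (inner ℝ (g i) v:ℝ)^2) :=
        fun i => by ring
      rw [Finset.sum_congr rfl fun i _ => per i]
      simp only [Finset.sum_add_distrib, ← Finset.mul_sum]
      rw [Finset.sum_congr rfl fun i _ => hε2 i, Finset.sum_const, Finset.card_univ,
        Fintype.card_fin, nsmul_eq_mul]
      ring
    have F1 : ∑ i, ∑ j, X i j * ((r * ε i + (inner ℝ (g i) v:ℝ)) * (r * ε j + (inner ℝ (g j) v:ℝ)))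
        ≤ ∑ i, (r * ε i + (inner ℝ (g i) v:ℝ))^2 :=
      quad_le_sum' X hsym hnn hrow (fun i => r * ε i + (inner ℝ (g i) v:ℝ))
    have F2 : (0:ℝ) ≤ ∑ i, ∑ j, X i j * ((inner ℝ (g i) v:ℝ) * (inner ℝ (g j) v:ℝ)) :=
      psd_quad_nonneg' X hpsd (fun i => (inner ℝ (g i) v:ℝ))
    have F3 : ∑ i, ∑ j, X i j * (inner ℝ (g i) (g j) : ℝ)
        ≤ (‖LinearMap.toContinuousLinearMap (Matrix.toEuclideanLin G)‖)^2 * 2 := by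
      have h := quadG_le' G g hG' X hpsd
      rw [htr] at h
      push_cast at h
      exact h
    have htrace : ((Matrix.of fun i j => ‖x i - x j‖ ^ 2) * X).trace
        = 2*(∑ i, ‖x i‖^2) - 2*(∑ i, ∑ j, X i j * (inner ℝ (x i) (x j) : ℝ)) := by
      rw [Matrix.trace]
      simp only [Matrix.diag_apply, Matrix.mul_apply, Matrix.of_apply]
      have per : ∀ i j, ‖x i - x j‖^2 * X j i
          = ‖x i‖^2 * X i j + ‖x j‖^2 * X i j - 2*(X i j * (inner ℝ (x i) (x j):ℝ)) := by
        intro i j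
        rw [hsym i j, norm_sub_sq_real]
        ring
      rw [Finset.sum_congr rfl fun i _ => Finset.sum_congr rfl fun j _ => per i j]
      have hA : ∑ i, ∑ j, ‖x i‖^2 * X i j = ∑ i, ‖x i‖^2 := by
        refine Finset.sum_congr rfl fun i _ => ?_
        rw [← Finset.mul_sum, hrow i, mul_one]
      have hB : ∑ i, ∑ j, ‖x j‖^2 * X i j = ∑ i, ‖x i‖^2 := by
        rw [Finset.sum_comm]
        refine Finset.sum_congr rfl fun j _ => ?_
        rw [← Finset.mul_sum, hcol j, mul_one]
      have hsplit : ∑ i, ∑ j, (‖x i‖^2 * X i j + ‖x j‖^2 * X i j - 2*(X i j * (inner ℝ (x i) (x j):ℝ)))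
          = (∑ i, ∑ j, ‖x i‖^2 * X i j) + (∑ i, ∑ j, ‖x j‖^2 * X i j)
            - 2*(∑ i, ∑ j, X i j * (inner ℝ (x i) (x j):ℝ)) := by
        rw [← Finset.sum_add_distrib, Finset.mul_sum, ← Finset.sum_sub_distrib]
        refine Finset.sum_congr rfl fun i _ => ?_
        rw [← Finset.sum_add_distrib, Finset.mul_sum, ← Finset.sum_sub_distrib]
      rw [hsplit, hA, hB]
      ring
    have hbval : b = (s:ℝ)⁻¹ * ((∑ i, ‖x i‖^2) - ∑ i, ∑ j, X i j * (inner ℝ (x i) (x j):ℝ)) := by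
      rw [hb, htrace]
      simp only [Fintype.card_fin]
      rw [mul_inv]
      ring
    have key : ((∑ i, ‖x i‖^2) - ∑ i, ∑ j, X i j * (inner ℝ (x i) (x j):ℝ))
        - ((∑ i, ‖g i‖^2 - ∑ i, (inner ℝ (g i) v:ℝ)^2)
            - 2*(‖LinearMap.toContinuousLinearMap (Matrix.toEuclideanLin G)‖)^2)
        = ((∑ i, (r * ε i + (inner ℝ (g i) v:ℝ))^2)
            - ∑ i, ∑ j, X i j * ((r * ε i + (inner ℝ (g i) v:ℝ)) * (r * ε j + (inner ℝ (g j) v:ℝ))))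
          + (∑ i, ∑ j, X i j * ((inner ℝ (g i) v:ℝ) * (inner ℝ (g j) v:ℝ)))
          + ((‖LinearMap.toContinuousLinearMap (Matrix.toEuclideanLin G)‖)^2 * 2
              - ∑ i, ∑ j, X i j * (inner ℝ (g i) (g j):ℝ)) := by
      linear_combination S1 - hQx - hw2 + hQw
    have hfin : (∑ i, ‖g i‖^2 - ∑ i, (inner ℝ (g i) v:ℝ)^2)
          - 2*(‖LinearMap.toContinuousLinearMap (Matrix.toEuclideanLin G)‖)^2
        ≤ (∑ i, ‖x i‖^2) - ∑ i, ∑ j, X i j * (inner ℝ (x i) (x j):ℝ) := by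
      linarith
    have hps : ∑ i, ‖x i - (inner ℝ (x i) v:ℝ) • v‖^2
        = ∑ i, ‖g i‖^2 - ∑ i, (inner ℝ (g i) v:ℝ)^2 := by
      rw [← Finset.sum_sub_distrib]
      exact Finset.sum_congr rfl fun i _ => hproj i
    calc (s:ℝ)⁻¹ * ∑ i, ‖x i - (inner ℝ (x i) v:ℝ) • v‖^2 - 2/(s:ℝ) * specNorm G^2
        = (s:ℝ)⁻¹ * ((∑ i, ‖g i‖^2 - ∑ i, (inner ℝ (g i) v:ℝ)^2)
            - 2*(‖LinearMap.toContinuousLinearMap (Matrix.toEuclideanLin G)‖)^2) := by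
          rw [hps, hNsp]; ring
      _ ≤ (s:ℝ)⁻¹ * ((∑ i, ‖x i‖^2) - ∑ i, ∑ j, X i j * (inner ℝ (x i) (x j):ℝ)) :=
          mul_le_mul_of_nonneg_left hfin (by positivity)
      _ = b := hbval.symm
end
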